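/- arXiv:0910.1173 — 4 statements merged into one kernel-verified Lean document; each statement's English description precedes it below -/
import Mathlib

section
/- Let n ≥ 1 and let P_0, P_1, …, P_n be points of ℝ². Let γ : [0,1] → ℝ² be the piecewise-linear path that traverses the segments [P_0,P_1], [P_1,P_2], …, [P_{n−1},P_n] in order (affinely on each of n consecutive subintervals of equal length), and assume γ is injective. Let Γ = γ([0,1]) and let ℓ(Γ) = Σ_{i=0}^{n−1} dist(P_i, P_{i+1}). Then the function (ρ,θ) ↦ card(Γ ∩ L(ρ,θ)) (with the convention that an infinite intersection is counted as 0) is integrable on ℝ × [0,π) with respect to Lebesgue measure dρ dθ, and ∫_{θ∈[0,π)} ∫_{ρ∈ℝ} card(Γ ∩ L(ρ,θ)) dρ dθ = 2 ℓ(Γ). -/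
noncomputable section
open MeasureTheory Real Set
open scoped ENNReal

/-- The line `L(ρ,θ) = {(x,y) : x cos θ + y sin θ = ρ}` in the Euclidean plane. -/
def paramLine (ρ θ : ℝ) : Set (EuclideanSpace ℝ (Fin 2)) :=
  {q : EuclideanSpace ℝ (Fin 2) | q 0 * Real.cos θ + q 1 * Real.sin θ = ρ}

abbrev Epl := EuclideanSpace ℝ (Fin 2)

def proj2 (q : Epl) (θ : ℝ) : ℝ := q 0 * Real.cos θ + q 1 * Real.sin θ

set_option linter.unusedSectionVars false
set_option linter.unusedVariables false


lemma abs_cos_periodic : Function.Periodic (fun x : ℝ => |Real.cos x|) π := by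
  intro x; simp [Real.cos_add_pi]

lemma integral_abs_cos : ∫ θ in (0:ℝ)..π, |Real.cos θ| = 2 := by
  have h1 : ∫ θ in (0:ℝ)..(π/2), |Real.cos θ| = 1 := by
    rw [intervalIntegral.integral_congr (g := Real.cos)]
    · simp [integral_cos]
    · intro x hx
      rw [Set.uIcc_of_le (by positivity)] at hx
      exact abs_of_nonneg (Real.cos_nonneg_of_mem_Icc ⟨by linarith [hx.1, Real.pi_pos], hx.2⟩)
  have h2 : ∫ θ in (π/2:ℝ)..π, |Real.cos θ| = 1 := by
    rw [intervalIntegral.integral_congr (g := fun x => -Real.cos x)]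
    · simp [integral_cos]
    · intro x hx
      rw [Set.uIcc_of_le (by linarith [Real.pi_pos])] at hx
      exact abs_of_nonpos (Real.cos_nonpos_of_pi_div_two_le_of_le hx.1 (by linarith [hx.2, Real.pi_pos]))
  rw [← intervalIntegral.integral_add_adjacent_intervals (b := π/2)]
  · rw [h1, h2]; norm_num
  · exact (Real.continuous_cos.abs).intervalIntegrable _ _
  · exact (Real.continuous_cos.abs).intervalIntegrable _ _

lemma integral_abs_cos_sub (φ : ℝ) : ∫ θ in (0:ℝ)..π, |Real.cos (θ - φ)| = 2 := by
  rw [intervalIntegral.integral_comp_sub_right (fun u => |Real.cos u|) φ]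
  have := abs_cos_periodic.intervalIntegral_add_eq (-φ) 0
  rw [show (0:ℝ) - φ = -φ by ring, show π - φ = -φ + π by ring, this, zero_add,
    integral_abs_cos]

lemma integral_abs_cos_sin (c s : ℝ) :
    ∫ θ in (0:ℝ)..π, |c * Real.cos θ + s * Real.sin θ| = 2 * Real.sqrt (c^2 + s^2) := by
  set z : ℂ := ⟨c, s⟩ with hz
  have habs : ‖z‖ = Real.sqrt (c^2 + s^2) := by
    rw [Complex.norm_def, Complex.normSq_mk]; ring_nf
  have hc : c = ‖z‖ * Real.cos z.arg := (Complex.norm_mul_cos_arg z).symm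
  have hs : s = ‖z‖ * Real.sin z.arg := (Complex.norm_mul_sin_arg z).symm
  calc ∫ θ in (0:ℝ)..π, |c * Real.cos θ + s * Real.sin θ|
      = ∫ θ in (0:ℝ)..π, ‖z‖ * |Real.cos (θ - z.arg)| := by
        apply intervalIntegral.integral_congr
        intro x _
        show |c * Real.cos x + s * Real.sin x| = ‖z‖ * |Real.cos (x - z.arg)|
        rw [show ‖z‖ * |Real.cos (x - z.arg)| = |‖z‖ * Real.cos (x - z.arg)|
          by rw [abs_mul, abs_of_nonneg (norm_nonneg z)]]
        congr 1
        rw [Real.cos_sub, hc, hs]; ring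
    _ = ‖z‖ * ∫ θ in (0:ℝ)..π, |Real.cos (θ - z.arg)| := by
        rw [intervalIntegral.integral_const_mul]
    _ = 2 * Real.sqrt (c^2 + s^2) := by rw [integral_abs_cos_sub, habs]; ring

lemma proj2_param (A B : Epl) (s θ : ℝ) :
    proj2 (A + s • (B - A)) θ = proj2 A θ + s * (proj2 B θ - proj2 A θ) := by
  simp only [proj2, PiLp.add_apply, PiLp.smul_apply, PiLp.sub_apply, smul_eq_mul]
  ring

lemma mem_paramLine_iff (x : Epl) (ρ θ : ℝ) : x ∈ paramLine ρ θ ↔ proj2 x θ = ρ := Iff.rfl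

lemma seg_inter_card (A B : Epl) (ρ θ : ℝ)
    (hA : proj2 A θ ≠ ρ) (hB : proj2 B θ ≠ ρ) :
    ((fun s : ℝ => A + s • (B - A)) '' Icc 0 1 ∩ paramLine ρ θ).ncard
      = Set.indicator (Set.uIcc (proj2 A θ) (proj2 B θ)) (fun _ => (1:ℕ)) ρ := by
  set a := proj2 A θ with ha
  set b := proj2 B θ with hb
  by_cases hab : a = b
  · have hempty : (fun s : ℝ => A + s • (B - A)) '' Icc 0 1 ∩ paramLine ρ θ = ∅ := by
      rw [Set.eq_empty_iff_forall_notMem]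
      rintro x ⟨⟨s, _, rfl⟩, hline⟩
      rw [mem_paramLine_iff, proj2_param, ← ha, ← hb, ← hab] at hline
      exact hA (by linarith [hline])
    rw [hempty]
    have : ρ ∉ Set.uIcc a b := by rw [← hab, Set.uIcc_self]; exact fun h => hA h.symm
    simp [Set.indicator_of_notMem this]
  · set s₀ := (ρ - a) / (b - a) with hs₀
    have hba : b - a ≠ 0 := sub_ne_zero.mpr (Ne.symm hab)
    have hkey : ∀ s : ℝ, a + s * (b - a) = ρ ↔ s = s₀ := by
      intro s
      rw [hs₀, eq_div_iff hba]
      constructor <;> intro h <;> linarith [h]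
    have hρs : ρ - a = s₀ * (b - a) := by rw [hs₀]; field_simp
    have hmem : ρ ∈ Set.uIcc a b ↔ s₀ ∈ Icc (0:ℝ) 1 := by
      rw [Set.mem_uIcc, Set.mem_Icc]
      rcases lt_or_gt_of_ne (fun h => hab h) with h | h
      · constructor
        · rintro (⟨h1, h2⟩ | ⟨h1, h2⟩) <;> exact ⟨by nlinarith, by nlinarith⟩
        · rintro ⟨h1, h2⟩; left; exact ⟨by nlinarith, by nlinarith⟩
      · constructor
        · rintro (⟨h1, h2⟩ | ⟨h1, h2⟩) <;> exact ⟨by nlinarith, by nlinarith⟩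
        · rintro ⟨h1, h2⟩; right; exact ⟨by nlinarith, by nlinarith⟩
    have hset : (fun s : ℝ => A + s • (B - A)) '' Icc 0 1 ∩ paramLine ρ θ
        = if s₀ ∈ Icc (0:ℝ) 1 then {A + s₀ • (B - A)} else ∅ := by
      ext x
      simp only [Set.mem_inter_iff, Set.mem_image, mem_paramLine_iff]
      constructor
      · rintro ⟨⟨s, hsmem, rfl⟩, hline⟩
        rw [proj2_param, ← ha, ← hb, hkey] at hline
        subst hline
        rw [if_pos hsmem]; exact Set.mem_singleton _
      · intro hx
        by_cases hc : s₀ ∈ Icc (0:ℝ) 1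
        · rw [if_pos hc, Set.mem_singleton_iff] at hx
          subst hx
          exact ⟨⟨s₀, hc, rfl⟩, by rw [proj2_param, ← ha, ← hb, hkey]⟩
        · rw [if_neg hc] at hx; exact absurd hx (Set.notMem_empty x)
    by_cases hc : s₀ ∈ Icc (0:ℝ) 1
    · rw [hset, if_pos hc, Set.ncard_singleton, Set.indicator_of_mem (hmem.mpr hc)]
    · rw [hset, if_neg hc, Set.ncard_empty,
        Set.indicator_of_notMem (fun hm => hc (hmem.mp hm))]

section Geom
variable {n : ℕ} (hn : 1 ≤ n) {P : Fin (n + 1) → Epl} {γ : ℝ → Epl}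
  (hγ : ∀ i : Fin n, ∀ t ∈ Set.Icc ((i : ℝ) / n) (((i : ℝ) + 1) / n),
      γ t = P i.castSucc + (((n : ℝ) * t - (i : ℝ)) • (P i.succ - P i.castSucc)))

include hn hγ

lemma npos : (0:ℝ) < n := by exact_mod_cast hn

lemma sub_Icc (i : Fin n) :
    Set.Icc ((i : ℝ) / n) (((i : ℝ) + 1) / n) ⊆ Set.Icc (0:ℝ) 1 := by
  have hnp : (0:ℝ) < n := npos hn hγ
  have hi : (i : ℝ) + 1 ≤ n := by
    have := i.isLt
    have : (i : ℝ) + 1 ≤ (n : ℝ) := by exact_mod_cast Nat.succ_le_of_lt i.isLt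
    exact this
  apply Set.Icc_subset_Icc
  · positivity
  · rw [div_le_one hnp]; exact hi

lemma seg_image (i : Fin n) :
    γ '' Set.Icc ((i : ℝ) / n) (((i : ℝ) + 1) / n)
      = (fun s : ℝ => P i.castSucc + s • (P i.succ - P i.castSucc)) '' Set.Icc 0 1 := by
  have hnp : (0:ℝ) < n := npos hn hγ
  ext x
  simp only [Set.mem_image]
  constructor
  · rintro ⟨t, ht, rfl⟩
    refine ⟨(n:ℝ) * t - i, ?_, (hγ i t ht).symm⟩
    obtain ⟨h1, h2⟩ := ht
    have h1' : (i:ℝ) ≤ t * n := (div_le_iff₀ hnp).mp h1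
    have h2' : t * n ≤ (i:ℝ) + 1 := (le_div_iff₀ hnp).mp h2
    constructor <;> [nlinarith; nlinarith]
  · rintro ⟨s, hs, rfl⟩
    have hmem : (s + i) / (n:ℝ) ∈ Set.Icc ((i : ℝ) / n) (((i : ℝ) + 1) / n) := by
      constructor
      · rw [div_le_div_iff₀ hnp hnp]; nlinarith [hs.1]
      · rw [div_le_div_iff₀ hnp hnp]; nlinarith [hs.2]
    refine ⟨(s + i) / n, hmem, ?_⟩
    rw [hγ i _ hmem]
    congr 1
    have : (n:ℝ) * ((s + i) / n) - i = s := by field_simp; ring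
    rw [this]
lemma endpoint_left (i : Fin n) : γ ((i:ℝ)/n) = P i.castSucc := by
  have hnp : (0:ℝ) < n := npos hn hγ
  have hmem : (i:ℝ)/n ∈ Set.Icc ((i : ℝ) / n) (((i : ℝ) + 1) / n) :=
    ⟨le_refl _, by rw [div_le_div_iff₀ hnp hnp]; nlinarith⟩
  rw [hγ i _ hmem]
  have : (n:ℝ) * ((i:ℝ)/n) - i = 0 := by field_simp; ring
  rw [this, zero_smul, add_zero]

lemma endpoint_right (i : Fin n) : γ (((i:ℝ)+1)/n) = P i.succ := by
  have hnp : (0:ℝ) < n := npos hn hγ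
  have hmem : ((i:ℝ)+1)/n ∈ Set.Icc ((i : ℝ) / n) (((i : ℝ) + 1) / n) :=
    ⟨by rw [div_le_div_iff₀ hnp hnp]; nlinarith, le_refl _⟩
  rw [hγ i _ hmem]
  have : (n:ℝ) * (((i:ℝ)+1)/n) - i = 1 := by field_simp; ring
  rw [this, one_smul, add_sub_cancel]

lemma Icc_eq_iUnion :
    Set.Icc (0:ℝ) 1 = ⋃ i : Fin n, Set.Icc ((i : ℝ) / n) (((i : ℝ) + 1) / n) := by
  have hnp : (0:ℝ) < n := npos hn hγ
  apply Set.Subset.antisymm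
  · intro t ht
    rw [Set.mem_iUnion]
    by_cases hk : Nat.floor (t * n) ≤ n - 1
    · refine ⟨⟨Nat.floor (t * n), lt_of_le_of_lt hk (Nat.sub_lt hn one_pos)⟩, ?_, ?_⟩
      · simp only []
        rw [div_le_iff₀ hnp]
        calc ((Nat.floor (t*n) : ℕ) : ℝ) ≤ t * n := Nat.floor_le (by nlinarith [ht.1])
        _ = t * n := rfl
      · simp only []
        rw [le_div_iff₀ hnp]
        have := Nat.lt_floor_add_one (t * n)
        push_cast
        linarith
    · push_neg at hk
      have hn1 : n - 1 < n := Nat.sub_lt hn one_pos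
      refine ⟨⟨n - 1, hn1⟩, ?_, ?_⟩
      · simp only []
        rw [div_le_iff₀ hnp]
        have h1 : (n:ℝ) ≤ t * n := by
          have : (n:ℕ) ≤ Nat.floor (t * n) := by omega
          have h2 : ((n:ℕ):ℝ) ≤ t * n := (Nat.le_floor_iff (by nlinarith [ht.1])).mp this
          exact h2
        have : ((n - 1 : ℕ) : ℝ) ≤ (n:ℝ) := by
          have := Nat.sub_le n 1
          exact_mod_cast this
        nlinarith [ht.2]
      · simp only []
        rw [le_div_iff₀ hnp]
        have hcast : ((n - 1 : ℕ) : ℝ) + 1 = (n:ℝ) := by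
          have := Nat.succ_pred_eq_of_pos (lt_of_lt_of_le one_pos hn)
          push_cast [Nat.cast_sub hn]
          ring
        rw [hcast]
        nlinarith [ht.2]
  · intro t ht
    rw [Set.mem_iUnion] at ht
    obtain ⟨i, hi⟩ := ht
    exact sub_Icc hn hγ i hi

lemma gamma_image :
    γ '' Set.Icc 0 1 = ⋃ i : Fin n, γ '' Set.Icc ((i : ℝ) / n) (((i : ℝ) + 1) / n) := by
  rw [Icc_eq_iUnion hn hγ, Set.image_iUnion]

end Geom

lemma seg_inter_subsingleton (A B : Epl) (ρ θ : ℝ) (hA : proj2 A θ ≠ ρ) :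
    ((fun s : ℝ => A + s • (B - A)) '' Icc 0 1 ∩ paramLine ρ θ).Subsingleton := by
  rintro x ⟨⟨s, _, rfl⟩, hx⟩ y ⟨⟨u, _, rfl⟩, hy⟩
  rw [mem_paramLine_iff, proj2_param] at hx hy
  by_cases hab : proj2 B θ - proj2 A θ = 0
  · rw [hab, mul_zero, add_zero] at hx
    exact absurd hx hA
  · have hsu : s = u := by
      have h0 : (s - u) * (proj2 B θ - proj2 A θ) = 0 := by linarith
      rcases mul_eq_zero.mp h0 with h | h
      · linarith
      · exact absurd h hab
    rw [hsu]

lemma ncard_biUnion_finset {α ι : Type*} (s : Finset ι) (f : ι → Set α)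
    (hfin : ∀ i ∈ s, (f i).Finite)
    (hdisj : ∀ i ∈ s, ∀ j ∈ s, i ≠ j → Disjoint (f i) (f j)) :
    (⋃ i ∈ s, f i).ncard = ∑ i ∈ s, (f i).ncard := by
  classical
  induction s using Finset.induction with
  | empty => simp
  | @insert a s ha ih =>
    have hfa : (f a).Finite := hfin a (Finset.mem_insert_self a s)
    have hfu : (⋃ i ∈ s, f i).Finite :=
      Set.Finite.biUnion (Set.finite_mem_finset s)
        (fun i hi => hfin i (Finset.mem_insert_of_mem hi))
    have hdis : Disjoint (f a) (⋃ i ∈ s, f i) := by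
      rw [Set.disjoint_iUnion₂_right]
      intro i hi
      exact hdisj a (Finset.mem_insert_self a s) i (Finset.mem_insert_of_mem hi)
        (fun h => ha (h ▸ hi))
    rw [Finset.set_biUnion_insert, Finset.sum_insert ha,
      Set.ncard_union_eq hdis hfa hfu,
      ih (fun i hi => hfin i (Finset.mem_insert_of_mem hi))
        (fun i hi j hj hij => hdisj i (Finset.mem_insert_of_mem hi)
          j (Finset.mem_insert_of_mem hj) hij)]


lemma card_inter_eq_sum {n : ℕ} (hn : 1 ≤ n) {P : Fin (n + 1) → Epl} {γ : ℝ → Epl}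
    (hγ : ∀ i : Fin n, ∀ t ∈ Set.Icc ((i : ℝ) / n) (((i : ℝ) + 1) / n),
      γ t = P i.castSucc + (((n : ℝ) * t - (i : ℝ)) • (P i.succ - P i.castSucc)))
    (hinj : Set.InjOn γ (Set.Icc 0 1)) (ρ θ : ℝ)
    (hgood : ∀ k : Fin (n + 1), proj2 (P k) θ ≠ ρ) :
    (γ '' Set.Icc 0 1 ∩ paramLine ρ θ).ncard
      = ∑ i : Fin n,
          Set.indicator (Set.uIcc (proj2 (P i.castSucc) θ) (proj2 (P i.succ) θ))
            (fun _ => (1:ℕ)) ρ := by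
  have hnp : (0:ℝ) < n := npos hn hγ
  set I : Fin n → Set ℝ := fun i => Set.Icc ((i:ℝ)/n) (((i:ℝ)+1)/n) with hI
  have hdecomp : γ '' Set.Icc 0 1 ∩ paramLine ρ θ
      = ⋃ i : Fin n, (γ '' I i ∩ paramLine ρ θ) := by
    rw [gamma_image hn hγ, Set.iUnion_inter]
  have hsegs : ∀ i : Fin n, γ '' I i ∩ paramLine ρ θ
      = (fun s : ℝ => P i.castSucc + s • (P i.succ - P i.castSucc)) '' Set.Icc 0 1
          ∩ paramLine ρ θ := fun i => by rw [hI]; rw [seg_image hn hγ i]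
  have hfin : ∀ i : Fin n, (γ '' I i ∩ paramLine ρ θ).Finite := fun i => by
    rw [hsegs i]
    exact Set.Subsingleton.finite (seg_inter_subsingleton _ _ _ _ (hgood _))
  have hdisj : ∀ i j : Fin n, i ≠ j →
      Disjoint (γ '' I i ∩ paramLine ρ θ) (γ '' I j ∩ paramLine ρ θ) := by
    intro i j hij
    rw [Set.disjoint_left]
    rintro x ⟨hxi, hxl⟩ ⟨hxj, _⟩
    have hx : x ∈ γ '' (I i ∩ I j) := by
      rw [hinj.image_inter (sub_Icc hn hγ i) (sub_Icc hn hγ j)]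
      exact ⟨hxi, hxj⟩
    obtain ⟨t, ⟨⟨hti1, hti2⟩, htj1, htj2⟩, rfl⟩ := hx
    rcases lt_or_gt_of_ne hij with h | h
    · have hij1 : (i:ℝ) + 1 ≤ (j:ℝ) := by exact_mod_cast Nat.succ_le_of_lt h
      have ht : t = ((i:ℝ)+1)/n := by
        apply le_antisymm hti2
        refine le_trans ?_ htj1
        rw [div_le_div_iff₀ hnp hnp]; nlinarith
      rw [ht, endpoint_right hn hγ i] at hxl
      exact hgood _ hxl
    · have hij1 : (j:ℝ) + 1 ≤ (i:ℝ) := by exact_mod_cast Nat.succ_le_of_lt h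
      have ht : t = ((j:ℝ)+1)/n := by
        apply le_antisymm htj2
        refine le_trans ?_ hti1
        rw [div_le_div_iff₀ hnp hnp]; nlinarith
      rw [ht, endpoint_right hn hγ j] at hxl
      exact hgood _ hxl
  have huniv : (⋃ i : Fin n, (γ '' I i ∩ paramLine ρ θ))
      = ⋃ i ∈ (Finset.univ : Finset (Fin n)), (γ '' I i ∩ paramLine ρ θ) := by simp
  rw [hdecomp, huniv,
    ncard_biUnion_finset Finset.univ _ (fun i _ => hfin i)
      (fun i _ j _ hij => hdisj i j hij)]
  apply Finset.sum_congr rfl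
  intro i _
  rw [hsegs i, seg_inter_card _ _ _ _ (hgood _) (hgood _)]

lemma continuous_proj2 (A : Epl) : Continuous (fun θ : ℝ => proj2 A θ) := by
  unfold proj2; fun_prop

def gfun (A B : Epl) : ℝ × ℝ → ℝ := fun p =>
  Set.indicator (Set.uIcc (proj2 A p.2) (proj2 B p.2)) (fun _ => (1:ℝ)) p.1

def gset (A B : Epl) : Set (ℝ × ℝ) :=
  {p : ℝ × ℝ | p.1 ∈ Set.uIcc (proj2 A p.2) (proj2 B p.2)}

lemma gset_measurable (A B : Epl) : MeasurableSet (gset A B) := by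
  have h1 : gset A B = {p : ℝ × ℝ | min (proj2 A p.2) (proj2 B p.2) ≤ p.1}
      ∩ {p : ℝ × ℝ | p.1 ≤ max (proj2 A p.2) (proj2 B p.2)} := by
    ext p
    simp [gset, Set.uIcc, Set.mem_Icc]
  rw [h1]
  exact MeasurableSet.inter
    (measurableSet_le (((continuous_proj2 A).comp continuous_snd).min
      ((continuous_proj2 B).comp continuous_snd)).measurable continuous_fst.measurable)
    (measurableSet_le continuous_fst.measurable
      (((continuous_proj2 A).comp continuous_snd).max
        ((continuous_proj2 B).comp continuous_snd)).measurable)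

lemma gfun_eq (A B : Epl) : gfun A B = (gset A B).indicator (fun _ => (1:ℝ)) := by
  funext p
  by_cases h : p.1 ∈ Set.uIcc (proj2 A p.2) (proj2 B p.2)
  · rw [gfun, Set.indicator_of_mem h, Set.indicator_of_mem (show p ∈ gset A B from h)]
  · rw [gfun, Set.indicator_of_notMem h,
      Set.indicator_of_notMem (show p ∉ gset A B from h)]

lemma gfun_nonneg (A B : Epl) (p : ℝ × ℝ) : 0 ≤ gfun A B p := by
  rw [gfun_eq]; exact Set.indicator_nonneg (fun _ _ => zero_le_one) p

lemma integral_rho (a b : ℝ) :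
    ∫ ρ : ℝ, Set.indicator (Set.uIcc a b) (fun _ => (1:ℝ)) ρ = |b - a| := by
  rw [integral_indicator_const (1:ℝ) measurableSet_uIcc]
  simp [Real.volume_interval, ENNReal.toReal_ofReal (abs_nonneg (b - a))]

lemma integrable_gfun (A B : Epl) :
    Integrable (gfun A B)
      ((volume : Measure ℝ).prod (volume.restrict (Set.Ico 0 π))) := by
  have hsm : AEStronglyMeasurable (gfun A B)
      ((volume : Measure ℝ).prod (volume.restrict (Set.Ico 0 π))) := by
    rw [gfun_eq]
    exact ((measurable_const.indicator (gset_measurable A B)).aestronglyMeasurable)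
  rw [integrable_prod_iff' hsm]
  constructor
  · apply Filter.Eventually.of_forall
    intro θ
    have : (fun ρ => gfun A B (ρ, θ))
        = Set.indicator (Set.uIcc (proj2 A θ) (proj2 B θ)) (fun _ => (1:ℝ)) := rfl
    rw [this, integrable_indicator_iff measurableSet_uIcc]
    exact (integrableOn_const_iff).mpr (Or.inr (by simp [Real.volume_interval]))
  · have heq : (fun θ => ∫ ρ, ‖gfun A B (ρ, θ)‖)
        = fun θ => |proj2 B θ - proj2 A θ| := by
      funext θ
      have h1 : (fun ρ => ‖gfun A B (ρ, θ)‖)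
          = Set.indicator (Set.uIcc (proj2 A θ) (proj2 B θ)) (fun _ => (1:ℝ)) := by
        funext ρ
        rw [Real.norm_eq_abs, abs_of_nonneg (gfun_nonneg A B _)]
        rfl
      rw [h1]
      exact integral_rho _ _
    rw [heq]
    exact (((continuous_proj2 B).sub (continuous_proj2 A)).abs.integrableOn_Icc).mono_set
      Set.Ico_subset_Icc_self

lemma integral_gfun (A B : Epl) :
    ∫ p, gfun A B p ∂((volume : Measure ℝ).prod (volume.restrict (Set.Ico 0 π)))
      = 2 * dist A B := by
  rw [integral_prod_symm _ (integrable_gfun A B)]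
  have h1 : ∀ θ : ℝ, (∫ ρ, gfun A B (ρ, θ)) = |proj2 B θ - proj2 A θ| := by
    intro θ
    have h0 : (fun ρ => gfun A B (ρ, θ))
        = Set.indicator (Set.uIcc (proj2 A θ) (proj2 B θ)) (fun _ => (1:ℝ)) := rfl
    rw [h0]
    exact integral_rho _ _
  rw [integral_congr_ae (Filter.Eventually.of_forall fun θ => h1 θ)]
  have h2 : ∫ θ in Set.Ico 0 π, |proj2 B θ - proj2 A θ|
      = ∫ θ in (0:ℝ)..π, |proj2 B θ - proj2 A θ| := by
    rw [intervalIntegral.integral_of_le Real.pi_pos.le,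
      MeasureTheory.integral_Ico_eq_integral_Ioo, MeasureTheory.integral_Ioc_eq_integral_Ioo]
  rw [h2]
  have h3 : ∀ θ : ℝ, |proj2 B θ - proj2 A θ|
      = |(B 0 - A 0) * Real.cos θ + (B 1 - A 1) * Real.sin θ| := by
    intro θ; unfold proj2; ring_nf
  rw [intervalIntegral.integral_congr (fun θ _ => h3 θ), integral_abs_cos_sin]
  rw [EuclideanSpace.dist_eq]
  congr 1
  rw [Fin.sum_univ_two, Real.dist_eq, Real.dist_eq, sq_abs, sq_abs]
  ring

lemma graph_null (g : ℝ → ℝ) (hg : Continuous g) :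
    (volume : Measure (ℝ × ℝ)) {p : ℝ × ℝ | p.1 = g p.2} = 0 := by
  have hT : MeasurableSet {q : ℝ × ℝ | q.2 = g q.1} :=
    measurableSet_eq_fun measurable_snd (hg.measurable.comp measurable_fst)
  have hswap : {p : ℝ × ℝ | p.1 = g p.2} = Prod.swap ⁻¹' {q : ℝ × ℝ | q.2 = g q.1} := by
    ext p; simp [Prod.swap]
  rw [Measure.volume_eq_prod, hswap,
    Measure.measurePreserving_swap.measure_preimage hT.nullMeasurableSet,
    Measure.prod_apply hT]
  have hz : ∀ x : ℝ, (volume : Measure ℝ) (Prod.mk x ⁻¹' {q : ℝ × ℝ | q.2 = g q.1}) = 0 := by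
    intro x
    have : Prod.mk x ⁻¹' {q : ℝ × ℝ | q.2 = g q.1} = {g x} := by
      ext y; simp
    rw [this]
    exact measure_singleton _
  rw [lintegral_congr hz]
  simp

lemma indicator_cast (S : Set ℝ) (ρ : ℝ) :
    ((Set.indicator S (fun _ => (1:ℕ)) ρ : ℕ) : ℝ) = Set.indicator S (fun _ => (1:ℝ)) ρ := by
  by_cases h : ρ ∈ S <;> simp [h]

/-- Cauchy–Crofton formula for an injective piecewise-linear path: the number of
intersection points with the line `L(ρ,θ)` (an infinite intersection counting as `0`,
via `Set.ncard`) is integrable in `(ρ,θ) ∈ ℝ × [0,π)`, and its integral equals twice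
the length of the path. -/
theorem crofton_integral_polygonal
    (n : ℕ) (hn : 1 ≤ n) (P : Fin (n + 1) → EuclideanSpace ℝ (Fin 2))
    (γ : ℝ → EuclideanSpace ℝ (Fin 2))
    (hγ : ∀ i : Fin n, ∀ t ∈ Set.Icc ((i : ℝ) / n) (((i : ℝ) + 1) / n),
      γ t = P i.castSucc + (((n : ℝ) * t - (i : ℝ)) • (P i.succ - P i.castSucc)))
    (hinj : Set.InjOn γ (Set.Icc 0 1)) :
    MeasureTheory.IntegrableOn
      (fun p : ℝ × ℝ => ((γ '' Set.Icc 0 1 ∩ paramLine p.1 p.2).ncard : ℝ))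
      ((Set.univ : Set ℝ) ×ˢ Set.Ico 0 Real.pi) ∧
    ∫ p in (Set.univ : Set ℝ) ×ˢ Set.Ico 0 Real.pi,
        ((γ '' Set.Icc 0 1 ∩ paramLine p.1 p.2).ncard : ℝ)
      = 2 * ∑ i : Fin n, dist (P i.castSucc) (P i.succ) := by
  have hμ : (volume : Measure (ℝ × ℝ)).restrict ((Set.univ : Set ℝ) ×ˢ Set.Ico 0 π)
      = (volume : Measure ℝ).prod (volume.restrict (Set.Ico 0 π)) := by
    rw [Measure.volume_eq_prod, ← Measure.prod_restrict, Measure.restrict_univ]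
  set f : ℝ × ℝ → ℝ
    := fun p => ((γ '' Set.Icc 0 1 ∩ paramLine p.1 p.2).ncard : ℝ) with hf
  set G : ℝ × ℝ → ℝ := fun p => ∑ i : Fin n, gfun (P i.castSucc) (P i.succ) p with hG
  have hGint : Integrable G ((volume : Measure ℝ).prod (volume.restrict (Set.Ico 0 π))) :=
    integrable_finset_sum _ (fun i _ => integrable_gfun _ _)
  have hN : (volume : Measure (ℝ × ℝ))
      {p : ℝ × ℝ | ∃ k : Fin (n + 1), proj2 (P k) p.2 = p.1} = 0 := by
    have hU : {p : ℝ × ℝ | ∃ k : Fin (n + 1), proj2 (P k) p.2 = p.1}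
        = ⋃ k : Fin (n + 1), {p : ℝ × ℝ | p.1 = proj2 (P k) p.2} := by
      ext p
      simp only [Set.mem_setOf_eq, Set.mem_iUnion]
      constructor
      · rintro ⟨k, hk⟩; exact ⟨k, hk.symm⟩
      · rintro ⟨k, hk⟩; exact ⟨k, hk.symm⟩
    rw [hU]
    exact measure_iUnion_null fun k => graph_null _ (continuous_proj2 (P k))
  have hae : f =ᵐ[(volume : Measure ℝ).prod (volume.restrict (Set.Ico 0 π))] G := by
    rw [← hμ]
    have hbad : (volume : Measure (ℝ × ℝ)).restrict ((Set.univ : Set ℝ) ×ˢ Set.Ico 0 π)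
        {p : ℝ × ℝ | ∃ k : Fin (n + 1), proj2 (P k) p.2 = p.1} = 0 :=
      le_antisymm (hN ▸ Measure.restrict_apply_le _ _) (by positivity)
    have hnm : ∀ᵐ p ∂(volume : Measure (ℝ × ℝ)).restrict
        ((Set.univ : Set ℝ) ×ˢ Set.Ico 0 π),
        p ∉ {p : ℝ × ℝ | ∃ k : Fin (n + 1), proj2 (P k) p.2 = p.1} :=
      (MeasureTheory.measure_eq_zero_iff_ae_notMem).mp hbad
    filter_upwards [hnm] with p hp
    have hgood : ∀ k : Fin (n + 1), proj2 (P k) p.2 ≠ p.1 := fun k hk => hp ⟨k, hk⟩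
    show f p = G p
    rw [hf, hG]
    simp only []
    rw [card_inter_eq_sum hn hγ hinj p.1 p.2 hgood, Nat.cast_sum]
    apply Finset.sum_congr rfl
    intro i _
    rw [indicator_cast]
    rfl
  constructor
  · show Integrable f ((volume : Measure (ℝ × ℝ)).restrict _)
    rw [hμ]
    exact hGint.congr hae.symm
  · show (∫ p, f p ∂(volume : Measure (ℝ × ℝ)).restrict _) = _
    rw [hμ, integral_congr_ae hae, hG]
    rw [integral_finset_sum _ (fun i _ => integrable_gfun _ _)]
    simp_rw [integral_gfun]
    rw [Finset.mul_sum]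
end
end

section
/- Let a₁, a₂ be real numbers with a₂ ≠ 2a₁. Let Γ(a₁,a₂) ⊆ ℝ² be the union of the two segments [(0,0),(1,a₁)] and [(1,a₁),(2,a₂)], with length ℓ = √(a₁² + 1) + √((a₂ − a₁)² + 1), and let δ be the one-dimensional Hausdorff measure of the topological frontier of the convex hull of Γ(a₁,a₂). Then the inconstancy ℐ(Γ(a₁,a₂)) := 2ℓ/δ equals 2 / (1 + √(a₂² + 4) / (√(a₁² + 1) + √((a₂ − a₁)² + 1))). -/
noncomputable section
open MeasureTheory Real Set
open scoped ENNReal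

/-- The point `(x, y)` of the Euclidean plane. -/
def pt (x y : ℝ) : EuclideanSpace ℝ (Fin 2) := WithLp.toLp 2 ![x, y]

/-- The two-segment curve `Γ(a₁,a₂)` joining `(0,0)` to `(1,a₁)` to `(2,a₂)`. -/
def twoSeg (a₁ a₂ : ℝ) : Set (EuclideanSpace ℝ (Fin 2)) :=
  segment ℝ (pt 0 0) (pt 1 a₁) ∪ segment ℝ (pt 1 a₁) (pt 2 a₂)

section Aux

variable {E : Type*} [NormedAddCommGroup E] [NormedSpace ℝ E]

/-- Face of a 2-simplex: the segment between two basis points equals the set of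
points with nonnegative barycentric coordinates whose third coordinate is zero. -/
lemma seg_eq_face (b : AffineBasis (Fin 3) ℝ E) {i j k : Fin 3}
    (hij : i ≠ j) (hik : i ≠ k) (hjk : j ≠ k) :
    segment ℝ (b i) (b j) = {x | (∀ m, 0 ≤ b.coord m x) ∧ b.coord k x = 0} := by
  have huniv : (Finset.univ : Finset (Fin 3)) = {i, j, k} := by
    refine (Finset.eq_univ_of_card _ ?_).symm
    rw [Finset.card_insert_of_notMem (by simp [hij, hik]),
      Finset.card_insert_of_notMem (by simp [hjk]), Finset.card_singleton]
    simp
  ext x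
  constructor
  · rintro ⟨u, v, hu, hv, huv, rfl⟩
    have key : ∀ m, b.coord m (u • b i + v • b j) =
        u * (if m = i then 1 else 0) + v * (if m = j then 1 else 0) := by
      intro m
      rw [Convex.combo_affine_apply huv]
      simp [AffineBasis.coord_apply, smul_eq_mul, eq_comm]
    constructor
    · intro m
      rw [key m]
      positivity
    · rw [key k]
      simp [Ne.symm hik, Ne.symm hjk]
  · rintro ⟨hpos, hk⟩
    refine ⟨b.coord i x, b.coord j x, hpos i, hpos j, ?_, ?_⟩
    · have h1 := b.sum_coord_apply_eq_one x
      rw [huniv, Finset.sum_insert (by simp [hij, hik]),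
        Finset.sum_insert (by simp [hjk]), Finset.sum_singleton, hk] at h1
      linarith
    · have h2 := b.linear_combination_coord_eq_self x
      rw [huniv, Finset.sum_insert (by simp [hij, hik]),
        Finset.sum_insert (by simp [hjk]), Finset.sum_singleton, hk, zero_smul, add_zero] at h2
      exact h2

/-- The frontier of a (2-dimensional) simplex is the union of its three edges. -/
lemma frontier_simplex (b : AffineBasis (Fin 3) ℝ E) :
    frontier (convexHull ℝ (range b)) =
      segment ℝ (b 0) (b 1) ∪ segment ℝ (b 1) (b 2) ∪ segment ℝ (b 0) (b 2) := by
  have hfin : FiniteDimensional ℝ E := b.finiteDimensional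
  have hclosed : IsClosed (convexHull ℝ (range b)) := by
    have : (range b).Finite := finite_range _
    exact (this.isCompact_convexHull ℝ).isClosed
  rw [hclosed.frontier_eq, b.interior_convexHull, b.convexHull_eq_nonneg_coord,
    seg_eq_face b (by decide : (0:Fin 3) ≠ 1) (by decide) (by decide : (1:Fin 3) ≠ 2),
    seg_eq_face b (by decide : (1:Fin 3) ≠ 2) (by decide : (1:Fin 3) ≠ 0) (by decide),
    seg_eq_face b (by decide : (0:Fin 3) ≠ 2) (by decide : (0:Fin 3) ≠ 1) (by decide)]
  ext x
  simp only [mem_diff, mem_setOf_eq, mem_union, not_forall, not_lt]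
  constructor
  · rintro ⟨hpos, m, hm⟩
    have hm0 : b.coord m x = 0 := le_antisymm hm (hpos m)
    have hm3 : m = 0 ∨ m = 1 ∨ m = 2 := by fin_cases m <;> simp
    rcases hm3 with rfl | rfl | rfl
    · exact Or.inl (Or.inr ⟨hpos, hm0⟩)
    · exact Or.inr ⟨hpos, hm0⟩
    · exact Or.inl (Or.inl ⟨hpos, hm0⟩)
  · rintro ((⟨hpos, hz⟩ | ⟨hpos, hz⟩) | ⟨hpos, hz⟩)
    exacts [⟨hpos, 2, le_of_eq hz⟩, ⟨hpos, 0, le_of_eq hz⟩, ⟨hpos, 1, le_of_eq hz⟩]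

/-- Two distinct edges of a simplex meet only at their common vertex. -/
lemma seg_inter_subset (b : AffineBasis (Fin 3) ℝ E) {i j k : Fin 3}
    (hij : i ≠ j) (hik : i ≠ k) (hjk : j ≠ k) :
    segment ℝ (b i) (b j) ∩ segment ℝ (b j) (b k) ⊆ {b j} := by
  rw [seg_eq_face b hij hik hjk,
    seg_eq_face b hjk (Ne.symm hij) (Ne.symm hik)]
  rintro x ⟨⟨hpos, hk⟩, ⟨-, hi⟩⟩
  have huniv : (Finset.univ : Finset (Fin 3)) = {i, j, k} := by
    refine (Finset.eq_univ_of_card _ ?_).symm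
    rw [Finset.card_insert_of_notMem (by simp [hij, hik]),
      Finset.card_insert_of_notMem (by simp [hjk]), Finset.card_singleton]
    simp
  refine b.ext_elem fun m => ?_
  have hmem : m = i ∨ m = j ∨ m = k := by
    have : m ∈ ({i, j, k} : Finset (Fin 3)) := huniv ▸ Finset.mem_univ m
    simpa using this
  have hsum := b.sum_coord_apply_eq_one x
  rw [huniv, Finset.sum_insert (by simp [hij, hik]),
    Finset.sum_insert (by simp [hjk]), Finset.sum_singleton, hi, hk] at hsum
  rcases hmem with rfl | rfl | rfl
  · rw [hi, b.coord_apply_ne hij]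
  · rw [b.coord_apply_eq]; linarith
  · rw [hk, b.coord_apply_ne (Ne.symm hjk)]

/-- The 1-dimensional Hausdorff measure of the frontier of a 2-simplex is the
sum of the lengths of its three edges. -/
lemma measure_frontier_simplex [MeasurableSpace E] [BorelSpace E]
    (b : AffineBasis (Fin 3) ℝ E) :
    μH[1] (frontier (convexHull ℝ (range b))) =
      edist (b 0) (b 1) + edist (b 1) (b 2) + edist (b 0) (b 2) := by
  have hfin : FiniteDimensional ℝ E := b.finiteDimensional
  haveI : NullSingletonClass (μH[1] : Measure E) := MeasureTheory.Measure.noAtoms_hausdorff E one_pos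
  have hseg : ∀ x y : E, NullMeasurableSet (segment ℝ x y) (μH[1]) := by
    intro x y
    rw [← convexHull_pair (𝕜 := ℝ) x y]
    have hfinxy : ({x, y} : Set E).Finite := (Set.finite_singleton y).insert x
    exact (hfinxy.isCompact_convexHull ℝ).isClosed.measurableSet.nullMeasurableSet
  rw [frontier_simplex b]
  have h01_02 : segment ℝ (b 0) (b 1) ∩ segment ℝ (b 0) (b 2) ⊆ {b 0} := by
    have := seg_inter_subset b (i := 1) (j := 0) (k := 2) (by decide) (by decide) (by decide)
    rwa [segment_symm ℝ (b 1) (b 0)] at this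
  have h12_02 : segment ℝ (b 1) (b 2) ∩ segment ℝ (b 0) (b 2) ⊆ {b 2} := by
    have := seg_inter_subset b (i := 1) (j := 2) (k := 0) (by decide) (by decide) (by decide)
    rwa [segment_symm ℝ (b 2) (b 0)] at this
  have h01_12 : segment ℝ (b 0) (b 1) ∩ segment ℝ (b 1) (b 2) ⊆ {b 1} :=
    seg_inter_subset b (by decide) (by decide) (by decide)
  have hd1 : AEDisjoint (μH[1])
      (segment ℝ (b 0) (b 1) ∪ segment ℝ (b 1) (b 2)) (segment ℝ (b 0) (b 2)) := by
    refine measure_mono_null ?_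
      (((Set.finite_singleton (b 0)).insert (b 2)).countable.measure_zero _)
    rw [union_inter_distrib_right]
    exact union_subset (h01_02.trans (by simp)) (h12_02.trans (by simp [Set.insert_comm]))
  have hd2 : AEDisjoint (μH[1]) (segment ℝ (b 0) (b 1)) (segment ℝ (b 1) (b 2)) :=
    measure_mono_null h01_12 ((Set.countable_singleton _).measure_zero _)
  rw [measure_union₀ (hseg _ _) hd1, measure_union₀ (hseg _ _) hd2,
    hausdorffMeasure_segment, hausdorffMeasure_segment, hausdorffMeasure_segment]

end Aux

lemma range_three {α : Type*} (a b c : α) : range ![a, b, c] = {a, b, c} := by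
  ext x; simp [Matrix.range_cons, Matrix.range_empty]; tauto

lemma indep_aux (a₁ a₂ : ℝ) (h : a₂ ≠ 2 * a₁) :
    AffineIndependent ℝ ![pt 0 0, pt 1 a₁, pt 2 a₂] := by
  rw [affineIndependent_iff_not_collinear]
  intro hc
  rw [range_three, collinear_iff_exists_forall_eq_smul_vadd] at hc
  obtain ⟨q, v, hv⟩ := hc
  obtain ⟨r0, h0⟩ := hv (pt 0 0) (by simp)
  obtain ⟨r1, h1⟩ := hv (pt 1 a₁) (by simp)
  obtain ⟨r2, h2⟩ := hv (pt 2 a₂) (by simp)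
  have c00 : (0:ℝ) = r0 * v 0 + q 0 := congrArg (fun w : EuclideanSpace ℝ (Fin 2) => w 0) h0
  have c01 : (0:ℝ) = r0 * v 1 + q 1 := congrArg (fun w : EuclideanSpace ℝ (Fin 2) => w 1) h0
  have c10 : (1:ℝ) = r1 * v 0 + q 0 := congrArg (fun w : EuclideanSpace ℝ (Fin 2) => w 0) h1
  have c11 : a₁ = r1 * v 1 + q 1 := congrArg (fun w : EuclideanSpace ℝ (Fin 2) => w 1) h1
  have c20 : (2:ℝ) = r2 * v 0 + q 0 := congrArg (fun w : EuclideanSpace ℝ (Fin 2) => w 0) h2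
  have c21 : a₂ = r2 * v 1 + q 1 := congrArg (fun w : EuclideanSpace ℝ (Fin 2) => w 1) h2
  have hv0 : (r1 - r0) * v 0 = 1 := by linear_combination c00 - c10
  have hv2 : (r2 - r0) * v 0 = 2 := by linear_combination c00 - c20
  have ha1 : (r1 - r0) * v 1 = a₁ := by linear_combination c01 - c11
  have ha2 : (r2 - r0) * v 1 = a₂ := by linear_combination c01 - c21
  have hvne : v 0 ≠ 0 := by
    intro hz; rw [hz, mul_zero] at hv0; exact one_ne_zero hv0.symm
  have hkey : r2 - r0 - 2 * (r1 - r0) = 0 := by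
    have : (r2 - r0 - 2 * (r1 - r0)) * v 0 = 0 := by linear_combination hv2 - 2 * hv0
    exact (mul_eq_zero.mp this).resolve_right hvne
  exact h (by linear_combination -ha2 + 2 * ha1 + v 1 * hkey)

lemma dist_pt (x y x' y' : ℝ) :
    dist (pt x y) (pt x' y') = Real.sqrt ((x - x') ^ 2 + (y - y') ^ 2) := by
  rw [EuclideanSpace.dist_eq]
  congr 1
  rw [Fin.sum_univ_two]
  simp [pt, Real.dist_eq, sq_abs]

/-- If `a₂ ≠ 2a₁`, the inconstancy `ℐ(Γ(a₁,a₂)) = 2ℓ/δ` of the two-segment curve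
`Γ(a₁,a₂)` — where `ℓ = √(a₁²+1) + √((a₂−a₁)²+1)` is its length and `δ` is the
one-dimensional Hausdorff measure of the frontier of its convex hull — equals
`2 / (1 + √(a₂²+4) / (√(a₁²+1) + √((a₂−a₁)²+1)))`. -/
theorem inconstancy_twoSeg (a₁ a₂ : ℝ) (h : a₂ ≠ 2 * a₁) :
    2 * (Real.sqrt (a₁ ^ 2 + 1) + Real.sqrt ((a₂ - a₁) ^ 2 + 1))
        / (μH[1] (frontier (convexHull ℝ (twoSeg a₁ a₂)))).toReal
      = 2 / (1 + Real.sqrt (a₂ ^ 2 + 4)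
          / (Real.sqrt (a₁ ^ 2 + 1) + Real.sqrt ((a₂ - a₁) ^ 2 + 1))) := by
  have hind := indep_aux a₁ a₂ h
  have hspan : affineSpan ℝ (range ![pt 0 0, pt 1 a₁, pt 2 a₂]) = ⊤ := by
    rw [hind.affineSpan_eq_top_iff_card_eq_finrank_add_one]
    simp
  let b : AffineBasis (Fin 3) ℝ (EuclideanSpace ℝ (Fin 2)) := ⟨![pt 0 0, pt 1 a₁, pt 2 a₂], hind, hspan⟩
  have hb0 : b 0 = pt 0 0 := rfl
  have hb1 : b 1 = pt 1 a₁ := rfl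
  have hb2 : b 2 = pt 2 a₂ := rfl
  have hbr : range ⇑b = {pt 0 0, pt 1 a₁, pt 2 a₂} := range_three _ _ _
  have hhull : convexHull ℝ (twoSeg a₁ a₂) = convexHull ℝ (range ⇑b) := by
    rw [hbr]
    refine le_antisymm (convexHull_min ?_ (convex_convexHull ℝ _)) (convexHull_mono ?_)
    · refine union_subset ?_ ?_
      · exact segment_subset_convexHull (by simp) (by simp)
      · exact segment_subset_convexHull (by simp) (by simp)
    · rintro x (rfl | rfl | rfl)
      · exact Or.inl (left_mem_segment ℝ _ _)
      · exact Or.inl (right_mem_segment ℝ _ _)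
      · exact Or.inr (right_mem_segment ℝ _ _)
  rw [hhull, measure_frontier_simplex b, hb0, hb1, hb2]
  rw [edist_dist, edist_dist, edist_dist,
    ← ENNReal.ofReal_add dist_nonneg dist_nonneg,
    ← ENNReal.ofReal_add (by positivity) dist_nonneg,
    ENNReal.toReal_ofReal (by positivity)]
  have hd01 : dist (pt 0 0) (pt 1 a₁) = Real.sqrt (a₁ ^ 2 + 1) := by
    rw [dist_pt]; congr 1; ring
  have hd12 : dist (pt 1 a₁) (pt 2 a₂) = Real.sqrt ((a₂ - a₁) ^ 2 + 1) := by
    rw [dist_pt]; congr 1; ring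
  have hd02 : dist (pt 0 0) (pt 2 a₂) = Real.sqrt (a₂ ^ 2 + 4) := by
    rw [dist_pt]; congr 1; ring
  rw [hd01, hd12, hd02]
  have hA : 0 < Real.sqrt (a₁ ^ 2 + 1) + Real.sqrt ((a₂ - a₁) ^ 2 + 1) := by positivity
  have hC : 0 ≤ Real.sqrt (a₂ ^ 2 + 4) := Real.sqrt_nonneg _
  rw [div_eq_div_iff (by positivity) (by positivity)]
  field_simp
end
end

section
/- Let h > 0, N ≥ 2, and let u₀, u₁, …, u_N be real numbers each equal to 0 or h, with u₀ = 0 and u_N = h. Let α ≥ 1 be the least index with u_α = h, and let γ ≥ 0 be the greatest index with u_γ = 0. Let N₀₀, N_hh, N₀h, N_h0 be respectively the number of indices 0 ≤ i < N with (u_i, u_{i+1}) equal to (0,0), (h,h), (0,h), (h,0). Let Γ_N ⊆ ℝ² be the polygonal curve through (0,u₀), …, (N,u_N), with length ℓ(Γ_N) = Σ_{i<N} √(1 + (u_{i+1} − u_i)²), and let δ(Γ_N) be the one-dimensional Hausdorff measure of the frontier of the convex hull of Γ_N. Then the inconstancy ℐ(Γ_N) := 2ℓ(Γ_N)/δ(Γ_N)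 equals 2(N₀₀ + N_hh + √(1 + h²)(N₀h + N_h0)) / (√(h² + α²) + N − α + √(h² + (N − γ)²) + γ). -/
noncomputable section
open MeasureTheory Real Set Filter
open scoped ENNReal

/-- The polygonal curve `Γ_N` through `(0,u₀), (1,u₁), …, (N,u_N)`: the union of the
segments joining `(i, u_i)` to `(i+1, u_{i+1})` for `i = 0, …, N−1`. -/
def polyCurve (u : ℕ → ℝ) (N : ℕ) : Set (EuclideanSpace ℝ (Fin 2)) :=
  ⋃ i ∈ Finset.range N, segment ℝ (pt i (u i)) (pt (i + 1) (u (i + 1)))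

/-- The length `ℓ(Γ_N) = Σ_{i<N} √(1 + (u_{i+1} − u_i)²)` of the polygonal curve. -/
def polyLength (u : ℕ → ℝ) (N : ℕ) : ℝ :=
  ∑ i ∈ Finset.range N, Real.sqrt (1 + (u (i + 1) - u i) ^ 2)

/-- The perimeter `δ(Γ_N)` of the convex hull of the polygonal curve: the
one-dimensional Hausdorff measure of the frontier of the convex hull. -/
def polyDelta (u : ℕ → ℝ) (N : ℕ) : ℝ :=
  (μH[1] (frontier (convexHull ℝ (polyCurve u N)))).toReal

/-- The inconstancy `ℐ(Γ_N) := 2 ℓ(Γ_N) / δ(Γ_N)` of the polygonal curve. -/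
def polyIncon (u : ℕ → ℝ) (N : ℕ) : ℝ :=
  2 * polyLength u N / polyDelta u N

/-- The number of indices `0 ≤ i < N` with `u_i = j` and `u_{i+1} = j'`. -/
def blockCount (u : ℕ → ℝ) (N : ℕ) (j j' : ℝ) : ℕ :=
  ((Finset.range N).filter fun i => u i = j ∧ u (i + 1) = j').card

abbrev E2 := EuclideanSpace ℝ (Fin 2)

lemma pt_ext {p q : E2} (h0 : p 0 = q 0) (h1 : p 1 = q 1) : p = q := by
  ext i; fin_cases i
  · exact h0
  · exact h1

lemma combo_pt (s t x1 y1 x2 y2 : ℝ) :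
    s • pt x1 y1 + t • pt x2 y2 = pt (s*x1+t*x2) (s*y1+t*y2) := by
  apply pt_ext <;> simp [pt, PiLp.add_apply, PiLp.smul_apply]

lemma dist_pt_s11 (x1 y1 x2 y2 : ℝ) :
    dist (pt x1 y1) (pt x2 y2) = Real.sqrt ((x1-x2)^2 + (y1-y2)^2) := by
  rw [EuclideanSpace.dist_eq, Fin.sum_univ_two]
  simp [pt, Real.dist_eq, sq_abs]

lemma segment_pt_mem {x1 y1 x2 y2 : ℝ} {p : E2} :
    p ∈ segment ℝ (pt x1 y1) (pt x2 y2) ↔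
      ∃ a b : ℝ, 0 ≤ a ∧ 0 ≤ b ∧ a + b = 1 ∧ p 0 = a*x1+b*x2 ∧ p 1 = a*y1+b*y2 := by
  constructor
  · rintro ⟨a, b, ha, hb, hab, rfl⟩
    exact ⟨a, b, ha, hb, hab, by rw [combo_pt]; rfl, by rw [combo_pt]; rfl⟩
  · rintro ⟨a, b, ha, hb, hab, h0, h1⟩
    exact ⟨a, b, ha, hb, hab, by rw [combo_pt]; exact (pt_ext h0 h1).symm⟩

lemma mem_segment_horiz {x1 x2 x y : ℝ} (h1 : x1 ≤ x) (h2 : x ≤ x2) :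
    pt x y ∈ segment ℝ (pt x1 y) (pt x2 y) := by
  rcases eq_or_lt_of_le (h1.trans h2) with he | hlt
  · have hx1 : x = x1 := le_antisymm (he ▸ h2) h1
    rw [hx1]; exact left_mem_segment ℝ _ _
  · have hd : x2 - x1 ≠ 0 := sub_ne_zero.2 hlt.ne'
    refine segment_pt_mem.2 ⟨(x2-x)/(x2-x1), (x-x1)/(x2-x1), ?_, ?_, ?_, ?_, ?_⟩
    · exact div_nonneg (by linarith) (by linarith)
    · exact div_nonneg (by linarith) (by linarith)
    · field_simp; ring
    · show x = _
      field_simp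
      ring
    · show y = _
      field_simp
      ring

lemma isCompact_seg (x y : E2) : IsCompact (segment ℝ x y) := by
  rw [← convexHull_pair]
  exact (Set.toFinite _).isCompact_convexHull ℝ

lemma measH_subsingleton {s : Set E2} (hs : s.Subsingleton) : μH[1] s = 0 := by
  rcases hs.eq_empty_or_singleton with rfl | ⟨x, rfl⟩
  · simp
  · have hx : ({x} : Set E2) = segment ℝ x x := (segment_same ℝ x).symm
    rw [hx, hausdorffMeasure_segment, edist_self]

lemma meas_union_null {μ : Measure E2} {s t : Set E2} (ht : MeasurableSet t)
    (h0 : μ (s ∩ t) = 0) : μ (s ∪ t) = μ s + μ t := by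
  rw [← measure_union_add_inter s ht, h0, add_zero]

lemma not_mem_interior_support {K : Set E2} {c h1 h2 : ℝ} (hne : h1 ≠ 0 ∨ h2 ≠ 0)
    (hK : ∀ q ∈ K, h1 * q 0 + h2 * q 1 ≤ c) {p : E2}
    (hp : h1 * p 0 + h2 * p 1 = c) : p ∉ interior K := by
  intro hi
  rw [mem_interior_iff_mem_nhds, Metric.mem_nhds_iff] at hi
  obtain ⟨ε, hε, hball⟩ := hi
  have hsq : 0 < h1^2 + h2^2 := by
    rcases hne with h | h
    · nlinarith [sq_abs h1, pow_pos (abs_pos.2 h) 2, sq_nonneg h2]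
    · nlinarith [sq_abs h2, pow_pos (abs_pos.2 h) 2, sq_nonneg h1]
  set n : ℝ := Real.sqrt (h1^2 + h2^2) with hn
  have hnpos : 0 < n := Real.sqrt_pos.2 hsq
  have hnormpt : ‖pt h1 h2‖ = n := by
    rw [EuclideanSpace.norm_eq, Fin.sum_univ_two]
    simp [pt, Real.norm_eq_abs, sq_abs, hn]
  set q : E2 := p + (ε/(2*n)) • pt h1 h2 with hq
  have hqball : q ∈ Metric.ball p ε := by
    rw [Metric.mem_ball, hq, dist_self_add_left, norm_smul, hnormpt, Real.norm_eq_abs,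
      abs_of_pos (by positivity)]
    have heq : ε / (2 * n) * n = ε / 2 := by field_simp
    rw [heq]; linarith
  have hqK := hK q (hball hqball)
  have hq0 : q 0 = p 0 + (ε/(2*n)) * h1 := by
    simp [hq, pt, PiLp.add_apply, PiLp.smul_apply]
  have hq1 : q 1 = p 1 + (ε/(2*n)) * h2 := by
    simp [hq, pt, PiLp.add_apply, PiLp.smul_apply]
  rw [hq0, hq1] at hqK
  have hpos : 0 < (ε/(2*n)) * (h1^2 + h2^2) := by positivity
  nlinarith [hqK, hp]

set_option maxHeartbeats 2000000 in
/-- Inconstancy of a finite `{0,h}`-valued sequence `u₀,…,u_N` with `u₀ = 0` and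
`u_N = h`, in terms of the counts of length-2 blocks, the length `α` of the longest
initial string of `0`'s, and the greatest index `γ` with `u_γ = 0`. -/
theorem polyIncon_binary_finite_beta_zero
    (h : ℝ) (hh : 0 < h) (N : ℕ) (hN : 2 ≤ N) (u : ℕ → ℝ)
    (hvals : ∀ i ≤ N, u i = 0 ∨ u i = h) (hu0 : u 0 = 0) (huN : u N = h)
    (α : ℕ) (hα1 : 1 ≤ α) (hαN : α ≤ N) (hαh : u α = h) (hαmin : ∀ i < α, u i = 0)
    (γ : ℕ) (hγN : γ ≤ N) (hγ0 : u γ = 0) (hγmax : ∀ i, γ < i → i ≤ N → u i = h) :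
    polyIncon u N =
      2 * ((blockCount u N 0 0 : ℝ) + (blockCount u N h h : ℝ)
            + Real.sqrt (1 + h ^ 2) * ((blockCount u N 0 h : ℝ) + (blockCount u N h 0 : ℝ)))
        / (Real.sqrt (h ^ 2 + (α : ℝ) ^ 2) + (N : ℝ) - (α : ℝ)
            + Real.sqrt (h ^ 2 + ((N : ℝ) - (γ : ℝ)) ^ 2) + (γ : ℝ)) := by
  classical
  have hγltN : γ < N := by
    rcases lt_or_eq_of_le hγN with hlt | hre
    · exact hlt
    · rw [hre] at hγ0; rw [hγ0] at huN; linarith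
  have hγα1 : γ = 0 → α = 1 := by
    intro hγz
    have hu1 : u 1 = h := hγmax 1 (by omega) (by omega)
    by_contra hne
    have h2α : 1 < α := lt_of_le_of_ne hα1 (Ne.symm hne)
    have hz := hαmin 1 h2α
    rw [hz] at hu1; linarith
  have hvert : ∀ j ≤ N, 0 ≤ u j ∧ u j ≤ h ∧
      h*(j:ℝ) + ((γ:ℝ)-N)*(u j) ≤ h*γ ∧ -h*(j:ℝ) + (α:ℝ)*(u j) ≤ 0 := by
    intro j hj
    rcases hvals j hj with h0 | hpos
    · have hjγ : j ≤ γ := by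
        by_contra hc
        push_neg at hc
        have hz := hγmax j hc hj
        rw [h0] at hz; linarith
      have hjγ' : (j:ℝ) ≤ γ := by exact_mod_cast hjγ
      have hj0 : (0:ℝ) ≤ j := Nat.cast_nonneg j
      refine ⟨by rw [h0], by rw [h0]; exact hh.le, ?_, ?_⟩
      · rw [h0]; nlinarith [mul_le_mul_of_nonneg_left hjγ' hh.le]
      · rw [h0]; nlinarith [mul_nonneg hh.le hj0]
    · have hαj : α ≤ j := by
        by_contra hc
        push_neg at hc
        have hz := hαmin j hc
        rw [hpos] at hz; linarith
      have hαj' : (α:ℝ) ≤ j := by exact_mod_cast hαj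
      have hjN : (j:ℝ) ≤ N := by exact_mod_cast hj
      have hγN' : (γ:ℝ) ≤ N := by exact_mod_cast hγN
      refine ⟨by rw [hpos]; exact hh.le, le_of_eq hpos, ?_, ?_⟩
      · rw [hpos]; nlinarith [mul_le_mul_of_nonneg_left hjN hh.le]
      · rw [hpos]; nlinarith [mul_le_mul_of_nonneg_left hαj' hh.le]
  set A : E2 := pt 0 0 with hAdef
  set B : E2 := pt γ 0 with hBdef
  set C : E2 := pt N h with hCdef
  set D : E2 := pt α h with hDdef
  have hptmem : ∀ i ≤ N, pt i (u i) ∈ polyCurve u N := by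
    intro i hi
    rcases lt_or_eq_of_le hi with hlt | hre
    · exact Set.mem_iUnion₂.2 ⟨i, Finset.mem_range.2 hlt, left_mem_segment ℝ _ _⟩
    · have h1 : i - 1 < N := by omega
      have h2 : i - 1 + 1 = i := by omega
      have hmem : pt ((i-1:ℕ)+1) (u ((i-1)+1)) ∈ polyCurve u N :=
        Set.mem_iUnion₂.2 ⟨i-1, Finset.mem_range.2 h1, right_mem_segment ℝ _ _⟩
      have hc : ((i-1:ℕ):ℝ) + 1 = (i:ℝ) := by
        rw [Nat.cast_sub (by omega : 1 ≤ i)]; ring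
      rw [h2] at hmem
      rw [← hc]
      exact hmem
  have hA : A ∈ polyCurve u N := by
    have hm := hptmem 0 (by omega)
    rw [hu0] at hm; simpa [hAdef] using hm
  have hB : B ∈ polyCurve u N := by
    have hm := hptmem γ hγN
    rw [hγ0] at hm; exact hm
  have hC : C ∈ polyCurve u N := by
    have hm := hptmem N le_rfl
    rw [huN] at hm; exact hm
  have hD : D ∈ polyCurve u N := by
    have hm := hptmem α hαN
    rw [hαh] at hm; exact hm
  set S : Set E2 := {p : E2 | 0 ≤ p 1 ∧ p 1 ≤ h ∧
      h*p 0 + ((γ:ℝ)-N)*p 1 ≤ h*γ ∧ -h*p 0 + (α:ℝ)*p 1 ≤ 0} with hSdef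
  have hSconv : Convex ℝ S := by
    intro x hx y hy a b ha hb hab
    rw [hSdef, Set.mem_setOf_eq] at hx hy
    obtain ⟨hx1, hx2, hx3, hx4⟩ := hx
    obtain ⟨hy1, hy2, hy3, hy4⟩ := hy
    have e0 : (a • x + b • y) 0 = a * x 0 + b * y 0 := by
      simp [PiLp.add_apply, PiLp.smul_apply]
    have e1 : (a • x + b • y) 1 = a * x 1 + b * y 1 := by
      simp [PiLp.add_apply, PiLp.smul_apply]
    rw [hSdef, Set.mem_setOf_eq, e0, e1]
    have hmul : ∀ z : ℝ, a*z + b*z = z := fun z => by rw [← add_mul, hab, one_mul]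
    refine ⟨?_, ?_, ?_, ?_⟩
    · linarith [mul_nonneg ha hx1, mul_nonneg hb hy1]
    · linarith [mul_le_mul_of_nonneg_left hx2 ha, mul_le_mul_of_nonneg_left hy2 hb, hmul h]
    · linarith [mul_le_mul_of_nonneg_left hx3 ha, mul_le_mul_of_nonneg_left hy3 hb,
        hmul (h*(γ:ℝ))]
    · linarith [mul_le_mul_of_nonneg_left hx4 ha, mul_le_mul_of_nonneg_left hy4 hb]
  have hcurveS : polyCurve u N ⊆ S := by
    intro p hp
    simp only [polyCurve, Set.mem_iUnion, exists_prop] at hp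
    obtain ⟨i, hi, hseg⟩ := hp
    rw [Finset.mem_range] at hi
    obtain ⟨a, b, ha, hb, hab, h0, h1⟩ := segment_pt_mem.1 hseg
    obtain ⟨e1, e2, e3, e4⟩ := hvert i (by omega)
    obtain ⟨f1, f2, f3, f4⟩ := hvert (i+1) (by omega)
    have hci : ((i+1:ℕ):ℝ) = (i:ℝ) + 1 := by push_cast; ring
    rw [← hci] at h0
    rw [hSdef, Set.mem_setOf_eq]
    have hmul : ∀ z : ℝ, a*z + b*z = z := fun z => by rw [← add_mul, hab, one_mul]
    refine ⟨?_, ?_, ?_, ?_⟩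
    · rw [h1]; linarith [mul_nonneg ha e1, mul_nonneg hb f1]
    · rw [h1]; linarith [mul_le_mul_of_nonneg_left e2 ha, mul_le_mul_of_nonneg_left f2 hb, hmul h]
    · rw [h0, h1]
      linarith [mul_le_mul_of_nonneg_left e3 ha, mul_le_mul_of_nonneg_left f3 hb, hmul (h*(γ:ℝ))]
    · rw [h0, h1]
      linarith [mul_le_mul_of_nonneg_left e4 ha, mul_le_mul_of_nonneg_left f4 hb]
  set K4 : Set E2 := convexHull ℝ ({A, B, C, D} : Set E2) with hK4def
  have hAK4 : A ∈ K4 := subset_convexHull ℝ _ (by simp)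
  have hBK4 : B ∈ K4 := subset_convexHull ℝ _ (by simp)
  have hCK4 : C ∈ K4 := subset_convexHull ℝ _ (by simp)
  have hDK4 : D ∈ K4 := subset_convexHull ℝ _ (by simp)
  have hSK4 : S ⊆ K4 := by
    intro p hp
    rw [hSdef, Set.mem_setOf_eq] at hp
    obtain ⟨s1, s2, s3, s4⟩ := hp
    set t : ℝ := p 1 / h with htdef
    have ht0 : 0 ≤ t := div_nonneg s1 hh.le
    have ht1 : t ≤ 1 := (div_le_one hh).2 s2
    have hth : t * h = p 1 := div_mul_cancel₀ _ hh.ne'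
    have hLmem : pt (t*(α:ℝ)) (p 1) ∈ K4 := by
      refine (convex_convexHull ℝ _).segment_subset hAK4 hDK4 ?_
      rw [hAdef, hDdef]
      exact segment_pt_mem.2 ⟨1-t, t, by linarith, ht0, by ring,
        by show t*(α:ℝ) = _; ring, by show p 1 = _; linarith⟩
    have hRmem : pt ((γ:ℝ) + t*((N:ℝ)-γ)) (p 1) ∈ K4 := by
      refine (convex_convexHull ℝ _).segment_subset hBK4 hCK4 ?_
      rw [hBdef, hCdef]
      exact segment_pt_mem.2 ⟨1-t, t, by linarith, ht0, by ring,
        by show (γ:ℝ) + t*((N:ℝ)-γ) = _; ring, by show p 1 = _; linarith⟩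
    have hL0 : t*(α:ℝ) ≤ p 0 := by
      have hm : (t*(α:ℝ)) * h ≤ p 0 * h := by
        have he : (t*(α:ℝ)) * h = (α:ℝ) * p 1 := by rw [← hth]; ring
        rw [he]; linarith
      exact le_of_mul_le_mul_right hm hh
    have hR0 : p 0 ≤ (γ:ℝ) + t*((N:ℝ)-γ) := by
      have hm : p 0 * h ≤ ((γ:ℝ) + t*((N:ℝ)-γ)) * h := by
        have he : ((γ:ℝ) + t*((N:ℝ)-γ)) * h = h*(γ:ℝ) + ((N:ℝ)-γ) * p 1 := by
          rw [← hth]; ring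
        rw [he]; linarith
      exact le_of_mul_le_mul_right hm hh
    have hpp : p = pt (p 0) (p 1) := pt_ext rfl rfl
    rw [hpp]
    exact (convex_convexHull ℝ _).segment_subset hLmem hRmem (mem_segment_horiz hL0 hR0)
  have hK4K : K4 ⊆ convexHull ℝ (polyCurve u N) := by
    refine convexHull_min ?_ (convex_convexHull ℝ _)
    intro x hx
    rcases hx with rfl | rfl | rfl | rfl
    · exact subset_convexHull ℝ _ hA
    · exact subset_convexHull ℝ _ hB
    · exact subset_convexHull ℝ _ hC
    · exact subset_convexHull ℝ _ hD
  have hKS : convexHull ℝ (polyCurve u N) ⊆ S := convexHull_min hcurveS hSconv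
  have hKeq : convexHull ℝ (polyCurve u N) = K4 := (hKS.trans hSK4).antisymm hK4K
  have hKclosed : IsClosed (convexHull ℝ (polyCurve u N)) := by
    rw [hKeq, hK4def]
    exact (Set.toFinite ({A, B, C, D} : Set E2)).isCompact_convexHull ℝ |>.isClosed
  set Si : Set E2 := {p : E2 | 0 < p 1 ∧ p 1 < h ∧
      h*p 0 + ((γ:ℝ)-N)*p 1 < h*γ ∧ -h*p 0 + (α:ℝ)*p 1 < 0} with hSidef
  have hSiopen : IsOpen Si := by
    rw [hSidef]
    have o1 : IsOpen {p : E2 | 0 < p 1} := isOpen_lt continuous_const (by fun_prop)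
    have o2 : IsOpen {p : E2 | p 1 < h} := isOpen_lt (by fun_prop) continuous_const
    have o3 : IsOpen {p : E2 | h*p 0 + ((γ:ℝ)-N)*p 1 < h*γ} :=
      isOpen_lt (by fun_prop) continuous_const
    have o4 : IsOpen {p : E2 | -h*p 0 + (α:ℝ)*p 1 < 0} :=
      isOpen_lt (by fun_prop) continuous_const
    have he : {p : E2 | 0 < p 1 ∧ p 1 < h ∧
        h*p 0 + ((γ:ℝ)-N)*p 1 < h*γ ∧ -h*p 0 + (α:ℝ)*p 1 < 0}
        = {p : E2 | 0 < p 1} ∩ ({p : E2 | p 1 < h} ∩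
        ({p : E2 | h*p 0 + ((γ:ℝ)-N)*p 1 < h*γ} ∩ {p : E2 | -h*p 0 + (α:ℝ)*p 1 < 0})) := by
      ext p; simp [Set.mem_setOf_eq, and_assoc]
    rw [he]
    exact o1.inter (o2.inter (o3.inter o4))
  have hSiint : Si ⊆ interior (convexHull ℝ (polyCurve u N)) := by
    refine interior_maximal ?_ hSiopen
    intro p hp
    rw [hSidef, Set.mem_setOf_eq] at hp
    obtain ⟨s1, s2, s3, s4⟩ := hp
    refine hK4K (hSK4 ?_)
    rw [hSdef, Set.mem_setOf_eq]
    exact ⟨s1.le, s2.le, s3.le, s4.le⟩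
  -- frontier characterization
  have hfr : frontier (convexHull ℝ (polyCurve u N)) =
      segment ℝ A B ∪ segment ℝ B C ∪ segment ℝ D C ∪ segment ℝ A D := by
    apply Set.Subset.antisymm
    · intro p hp
      rw [hKclosed.frontier_eq] at hp
      obtain ⟨hpK, hpint⟩ := hp
      have hpS := hKS hpK
      rw [hSdef, Set.mem_setOf_eq] at hpS
      obtain ⟨s1, s2, s3, s4⟩ := hpS
      have hpSi : ¬ (0 < p 1 ∧ p 1 < h ∧
          h*p 0 + ((γ:ℝ)-N)*p 1 < h*γ ∧ -h*p 0 + (α:ℝ)*p 1 < 0) := by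
        intro hc
        exact hpint (hSiint (by rw [hSidef, Set.mem_setOf_eq]; exact hc))
      simp only [not_and_or, not_lt] at hpSi
      have hpp : p = pt (p 0) (p 1) := pt_ext rfl rfl
      rcases hpSi with h1 | h2 | h3 | h4
      · -- bottom : segment A B
        have hp1 : p 1 = 0 := le_antisymm h1 s1
        left; left; left
        have hb1 : 0 ≤ p 0 := by
          refine (mul_le_mul_iff_right₀ hh).1 ?_
          rw [mul_zero]; rw [hp1] at s4; linarith
        have hb2 : p 0 ≤ (γ:ℝ) := by
          refine (mul_le_mul_iff_right₀ hh).1 ?_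
          rw [hp1] at s3; linarith
        rw [hpp, hp1, hAdef, hBdef]
        exact mem_segment_horiz hb1 hb2
      · -- top : segment D C
        have hp1 : p 1 = h := le_antisymm s2 h2
        left; right
        have hb1 : (α:ℝ) ≤ p 0 := by
          refine (mul_le_mul_iff_right₀ hh).1 ?_
          rw [hp1] at s4; linarith
        have hb2 : p 0 ≤ (N:ℝ) := by
          refine (mul_le_mul_iff_right₀ hh).1 ?_
          rw [hp1] at s3; linarith
        rw [hpp, hp1, hDdef, hCdef]
        exact mem_segment_horiz hb1 hb2
      · -- right slant : segment B C
        have he : h*p 0 + ((γ:ℝ)-N)*p 1 = h*γ := le_antisymm s3 h3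
        left; left; right
        rw [hpp, hBdef, hCdef]
        refine segment_pt_mem.2 ⟨1 - p 1/h, p 1/h, ?_, ?_, by ring, ?_, ?_⟩
        · have : p 1 / h ≤ 1 := (div_le_one hh).2 s2
          linarith
        · exact div_nonneg s1 hh.le
        · show p 0 = _
          have hmul : p 0 * h = ((1 - p 1/h)*(γ:ℝ) + (p 1/h)*(N:ℝ)) * h := by
            field_simp
            linarith [he]
          exact mul_right_cancel₀ hh.ne' hmul
        · show p 1 = _
          field_simp; ring
      · -- left slant : segment A D
        have he : -h*p 0 + (α:ℝ)*p 1 = 0 := le_antisymm s4 h4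
        right
        rw [hpp, hAdef, hDdef]
        refine segment_pt_mem.2 ⟨1 - p 1/h, p 1/h, ?_, ?_, by ring, ?_, ?_⟩
        · have : p 1 / h ≤ 1 := (div_le_one hh).2 s2
          linarith
        · exact div_nonneg s1 hh.le
        · show p 0 = _
          have hmul : p 0 * h = ((1 - p 1/h)*0 + (p 1/h)*(α:ℝ)) * h := by
            field_simp
            linarith [he]
          exact mul_right_cancel₀ hh.ne' hmul
        · show p 1 = _
          field_simp; ring
    · -- the four segments are in the frontier
      have hKmem : ∀ s : Set E2, s ⊆ convexHull ℝ (polyCurve u N) →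
          (∀ p ∈ s, p ∉ interior (convexHull ℝ (polyCurve u N))) →
          s ⊆ frontier (convexHull ℝ (polyCurve u N)) := by
        intro s hs1 hs2 p hp
        rw [hKclosed.frontier_eq]
        exact ⟨hs1 hp, hs2 p hp⟩
      have hKsupp : ∀ q ∈ convexHull ℝ (polyCurve u N), 0 ≤ q 1 ∧ q 1 ≤ h ∧
          h*q 0 + ((γ:ℝ)-N)*q 1 ≤ h*γ ∧ -h*q 0 + (α:ℝ)*q 1 ≤ 0 := by
        intro q hq
        have hqS := hKS hq
        rw [hSdef, Set.mem_setOf_eq] at hqS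
        exact hqS
      have hcc : Convex ℝ (convexHull ℝ (polyCurve u N)) := convex_convexHull ℝ _
      refine Set.union_subset (Set.union_subset (Set.union_subset ?_ ?_) ?_) ?_
      · -- segment A B
        refine hKmem _ (hcc.segment_subset (subset_convexHull ℝ _ hA)
          (subset_convexHull ℝ _ hB)) ?_
        intro p hp
        rw [hAdef, hBdef] at hp
        obtain ⟨a, b, ha, hb, hab, h0, h1⟩ := segment_pt_mem.1 hp
        refine not_mem_interior_support (c := 0) (h1 := 0) (h2 := -1)
          (Or.inr (by norm_num)) ?_ ?_
        · intro q hq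
          have := (hKsupp q hq).1
          linarith
        · rw [h1]; ring
      · -- segment B C
        refine hKmem _ (hcc.segment_subset (subset_convexHull ℝ _ hB)
          (subset_convexHull ℝ _ hC)) ?_
        intro p hp
        rw [hBdef, hCdef] at hp
        obtain ⟨a, b, ha, hb, hab, h0, h1⟩ := segment_pt_mem.1 hp
        refine not_mem_interior_support (c := h*γ) (h1 := h) (h2 := (γ:ℝ)-N)
          (Or.inl hh.ne') ?_ ?_
        · intro q hq
          exact (hKsupp q hq).2.2.1
        · rw [h0, h1]
          have hbb : a = 1 - b := by linarith
          rw [hbb]; ring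
      · -- segment D C
        refine hKmem _ (hcc.segment_subset (subset_convexHull ℝ _ hD)
          (subset_convexHull ℝ _ hC)) ?_
        intro p hp
        rw [hDdef, hCdef] at hp
        obtain ⟨a, b, ha, hb, hab, h0, h1⟩ := segment_pt_mem.1 hp
        refine not_mem_interior_support (c := h) (h1 := 0) (h2 := 1)
          (Or.inr one_ne_zero) ?_ ?_
        · intro q hq
          have := (hKsupp q hq).2.1
          linarith
        · rw [h1]
          have hbb : a = 1 - b := by linarith
          rw [hbb]; ring
      · -- segment A D
        refine hKmem _ (hcc.segment_subset (subset_convexHull ℝ _ hA)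
          (subset_convexHull ℝ _ hD)) ?_
        intro p hp
        rw [hAdef, hDdef] at hp
        obtain ⟨a, b, ha, hb, hab, h0, h1⟩ := segment_pt_mem.1 hp
        refine not_mem_interior_support (c := 0) (h1 := -h) (h2 := (α:ℝ))
          (Or.inl (neg_ne_zero.2 hh.ne')) ?_ ?_
        · intro q hq
          exact (hKsupp q hq).2.2.2
        · rw [h0, h1]; ring
  -- supporting line values on the four segments
  have cSb : ∀ p ∈ segment ℝ A B, p 1 = 0 := by
    intro p hp
    rw [hAdef, hBdef] at hp
    obtain ⟨a, b, ha, hb, hab, h0, h1⟩ := segment_pt_mem.1 hp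
    rw [h1]; ring
  have cSt : ∀ p ∈ segment ℝ D C, p 1 = h := by
    intro p hp
    rw [hDdef, hCdef] at hp
    obtain ⟨a, b, ha, hb, hab, h0, h1⟩ := segment_pt_mem.1 hp
    rw [h1, ← add_mul, hab, one_mul]
  have cSr : ∀ p ∈ segment ℝ B C, h*p 0 + ((γ:ℝ)-N)*p 1 = h*γ := by
    intro p hp
    rw [hBdef, hCdef] at hp
    obtain ⟨a, b, ha, hb, hab, h0, h1⟩ := segment_pt_mem.1 hp
    have hba : a = 1 - b := by linarith
    rw [h0, h1, hba]; ring
  have cSl : ∀ p ∈ segment ℝ A D, -h*p 0 + (α:ℝ)*p 1 = 0 := by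
    intro p hp
    rw [hAdef, hDdef] at hp
    obtain ⟨a, b, ha, hb, hab, h0, h1⟩ := segment_pt_mem.1 hp
    rw [h0, h1]; ring
  -- the pairwise intersections are subsingletons
  have sBR : (segment ℝ A B ∩ segment ℝ B C).Subsingleton := by
    intro p hp q hq
    have hp1 := cSb p hp.1; have hp2 := cSr p hp.2
    have hq1 := cSb q hq.1; have hq2 := cSr q hq.2
    rw [hp1] at hp2; rw [hq1] at hq2
    refine pt_ext ?_ (by rw [hp1, hq1])
    apply mul_left_cancel₀ hh.ne'
    linarith
  have sBT : (segment ℝ A B ∩ segment ℝ D C).Subsingleton := by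
    intro p hp q hq
    have h1 := cSb p hp.1; have h2 := cSt p hp.2
    rw [h1] at h2
    exact absurd h2 hh.ne
  have sRT : (segment ℝ B C ∩ segment ℝ D C).Subsingleton := by
    intro p hp q hq
    have hp1 := cSt p hp.2; have hp2 := cSr p hp.1
    have hq1 := cSt q hq.2; have hq2 := cSr q hq.1
    rw [hp1] at hp2; rw [hq1] at hq2
    refine pt_ext ?_ (by rw [hp1, hq1])
    apply mul_left_cancel₀ hh.ne'
    linarith
  have sBL : (segment ℝ A B ∩ segment ℝ A D).Subsingleton := by
    intro p hp q hq
    have hp1 := cSb p hp.1; have hp2 := cSl p hp.2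
    have hq1 := cSb q hq.1; have hq2 := cSl q hq.2
    rw [hp1] at hp2; rw [hq1] at hq2
    refine pt_ext ?_ (by rw [hp1, hq1])
    apply mul_left_cancel₀ hh.ne'
    linarith
  have sTL : (segment ℝ D C ∩ segment ℝ A D).Subsingleton := by
    intro p hp q hq
    have hp1 := cSt p hp.1; have hp2 := cSl p hp.2
    have hq1 := cSt q hq.1; have hq2 := cSl q hq.2
    rw [hp1] at hp2; rw [hq1] at hq2
    refine pt_ext ?_ (by rw [hp1, hq1])
    apply mul_left_cancel₀ hh.ne'
    linarith
  have sRL : (segment ℝ B C ∩ segment ℝ A D).Subsingleton := by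
    intro p hp q hq
    have hp1 := cSr p hp.1; have hp2 := cSl p hp.2
    have hq1 := cSr q hq.1; have hq2 := cSl q hq.2
    by_cases hc : (α:ℝ) + γ - N = 0
    · exfalso
      have he1 : ((α:ℝ) + γ - N) * p 1 = h * γ := by linarith
      rw [hc, zero_mul] at he1
      rcases mul_eq_zero.1 he1.symm with h' | h'
      · exact hh.ne' h'
      · have hγz : γ = 0 := by exact_mod_cast h'
        have hαo := hγα1 hγz
        rw [hγz, hαo] at hc
        have : (N:ℝ) = 1 := by push_cast at hc; linarith
        have : N = 1 := by exact_mod_cast this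
        omega
    · have hpq1 : p 1 = q 1 := by
        have e1 : ((α:ℝ) + γ - N) * p 1 = h * γ := by linarith
        have e2 : ((α:ℝ) + γ - N) * q 1 = h * γ := by linarith
        exact mul_left_cancel₀ hc (e1.trans e2.symm)
      have hpq0 : p 0 = q 0 := by
        apply mul_left_cancel₀ hh.ne'
        have e1 : h * p 0 = (α:ℝ) * p 1 := by linarith
        have e2 : h * q 0 = (α:ℝ) * q 1 := by linarith
        rw [e1, e2, hpq1]
      exact pt_ext hpq0 hpq1
  -- measure of the frontier
  have hms : ∀ x y : E2, MeasurableSet (segment ℝ x y) := fun x y =>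
    (isCompact_seg x y).measurableSet
  have hm1 : μH[1] (segment ℝ A B ∪ segment ℝ B C) =
      μH[1] (segment ℝ A B) + μH[1] (segment ℝ B C) :=
    meas_union_null (hms _ _) (measH_subsingleton sBR)
  have hm2 : μH[1] (segment ℝ A B ∪ segment ℝ B C ∪ segment ℝ D C) =
      μH[1] (segment ℝ A B ∪ segment ℝ B C) + μH[1] (segment ℝ D C) := by
    refine meas_union_null (hms _ _) ?_
    rw [Set.union_inter_distrib_right]
    exact measure_union_null (measH_subsingleton sBT) (measH_subsingleton sRT)
  have hm3 : μH[1] (segment ℝ A B ∪ segment ℝ B C ∪ segment ℝ D C ∪ segment ℝ A D) =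
      μH[1] (segment ℝ A B ∪ segment ℝ B C ∪ segment ℝ D C) + μH[1] (segment ℝ A D) := by
    refine meas_union_null (hms _ _) ?_
    rw [Set.union_inter_distrib_right, Set.union_inter_distrib_right]
    exact measure_union_null (measure_union_null
      (measH_subsingleton sBL) (measH_subsingleton sRL)) (measH_subsingleton sTL)
  have hdist : polyDelta u N = dist A B + dist B C + dist D C + dist A D := by
    rw [polyDelta, hfr, hm3, hm2, hm1, hausdorffMeasure_segment, hausdorffMeasure_segment,
      hausdorffMeasure_segment, hausdorffMeasure_segment, edist_dist, edist_dist,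
      edist_dist, edist_dist, ← ENNReal.ofReal_add dist_nonneg dist_nonneg,
      ← ENNReal.ofReal_add (add_nonneg dist_nonneg dist_nonneg) dist_nonneg,
      ← ENNReal.ofReal_add (add_nonneg (add_nonneg dist_nonneg dist_nonneg) dist_nonneg)
        dist_nonneg,
      ENNReal.toReal_ofReal
        (add_nonneg (add_nonneg (add_nonneg dist_nonneg dist_nonneg) dist_nonneg)
          dist_nonneg)]
  have dAB : dist A B = (γ:ℝ) := by
    rw [hAdef, hBdef, dist_pt_s11,
      show ((0:ℝ)-(γ:ℝ))^2 + ((0:ℝ)-0)^2 = (γ:ℝ)^2 from by ring]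
    exact Real.sqrt_sq (Nat.cast_nonneg γ)
  have dBC : dist B C = Real.sqrt (h^2 + ((N:ℝ)-γ)^2) := by
    rw [hBdef, hCdef, dist_pt_s11]; congr 1; ring
  have dDC : dist D C = (N:ℝ) - (α:ℝ) := by
    rw [hDdef, hCdef, dist_pt_s11,
      show ((α:ℝ)-(N:ℝ))^2 + (h-h)^2 = ((N:ℝ)-(α:ℝ))^2 from by ring]
    exact Real.sqrt_sq (sub_nonneg.2 (by exact_mod_cast hαN))
  have dAD : dist A D = Real.sqrt (h^2 + (α:ℝ)^2) := by
    rw [hAdef, hDdef, dist_pt_s11]; congr 1; ring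
  -- the length of the curve
  have hlen : polyLength u N = ((blockCount u N 0 0 : ℝ) + (blockCount u N h h : ℝ))
      + Real.sqrt (1+h^2) * ((blockCount u N 0 h : ℝ) + (blockCount u N h 0 : ℝ)) := by
    rw [polyLength,
      ← Finset.sum_filter_add_sum_filter_not (Finset.range N) (fun i => u i = u (i+1))]
    have hval1 : ∀ i ∈ (Finset.range N).filter (fun i => u i = u (i+1)),
        Real.sqrt (1 + (u (i+1) - u i)^2) = 1 := by
      intro i hi
      rw [Finset.mem_filter] at hi
      rw [hi.2]
      simp
    have hval2 : ∀ i ∈ (Finset.range N).filter (fun i => ¬ u i = u (i+1)),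
        Real.sqrt (1 + (u (i+1) - u i)^2) = Real.sqrt (1 + h^2) := by
      intro i hi
      rw [Finset.mem_filter, Finset.mem_range] at hi
      rcases hvals i (by omega) with c1 | c1 <;> rcases hvals (i+1) (by omega) with c2 | c2
      · exact absurd (c1.trans c2.symm) hi.2
      · rw [c1, c2]; congr 1; ring
      · rw [c1, c2]; congr 1; ring
      · exact absurd (c1.trans c2.symm) hi.2
    rw [Finset.sum_congr rfl hval1, Finset.sum_congr rfl hval2, Finset.sum_const,
      Finset.sum_const, nsmul_eq_mul, nsmul_eq_mul, mul_one]
    have hc1 : ((Finset.range N).filter (fun i => u i = u (i+1))).card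
        = blockCount u N 0 0 + blockCount u N h h := by
      rw [blockCount, blockCount, ← Finset.card_union_of_disjoint (by
        rw [Finset.disjoint_left]
        intro i h1 h2
        rw [Finset.mem_filter] at h1 h2
        exact hh.ne (h1.2.1.symm.trans h2.2.1))]
      congr 1
      ext i
      simp only [Finset.mem_filter, Finset.mem_union, Finset.mem_range]
      constructor
      · rintro ⟨hi, he⟩
        rcases hvals i (by omega) with c | c
        · exact Or.inl ⟨hi, c, by rw [← he]; exact c⟩
        · exact Or.inr ⟨hi, c, by rw [← he]; exact c⟩
      · rintro (⟨hi, c1, c2⟩ | ⟨hi, c1, c2⟩) <;> exact ⟨hi, by rw [c1, c2]⟩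
    have hc2 : ((Finset.range N).filter (fun i => ¬ u i = u (i+1))).card
        = blockCount u N 0 h + blockCount u N h 0 := by
      rw [blockCount, blockCount, ← Finset.card_union_of_disjoint (by
        rw [Finset.disjoint_left]
        intro i h1 h2
        rw [Finset.mem_filter] at h1 h2
        exact hh.ne (h1.2.1.symm.trans h2.2.1))]
      congr 1
      ext i
      simp only [Finset.mem_filter, Finset.mem_union, Finset.mem_range]
      constructor
      · rintro ⟨hi, he⟩
        rcases hvals i (by omega) with c1 | c1 <;>
          rcases hvals (i+1) (by omega) with c2 | c2
        · exact absurd (c1.trans c2.symm) he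
        · exact Or.inl ⟨hi, c1, c2⟩
        · exact Or.inr ⟨hi, c1, c2⟩
        · exact absurd (c1.trans c2.symm) he
      · rintro (⟨hi, c1, c2⟩ | ⟨hi, c1, c2⟩)
        · exact ⟨hi, by rw [c1, c2]; exact hh.ne⟩
        · exact ⟨hi, by rw [c1, c2]; exact hh.ne'⟩
    rw [hc1, hc2]
    push_cast
    ring
  -- conclusion
  rw [polyIncon, hlen, hdist, dAB, dBC, dDC, dAD,
    show (γ:ℝ) + Real.sqrt (h^2+((N:ℝ)-(γ:ℝ))^2) + ((N:ℝ)-(α:ℝ)) + Real.sqrt (h^2+(α:ℝ)^2)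
      = Real.sqrt (h ^ 2 + (α : ℝ) ^ 2) + (N : ℝ) - (α : ℝ)
        + Real.sqrt (h ^ 2 + ((N : ℝ) - (γ : ℝ)) ^ 2) + (γ : ℝ) from by ring]
end
end

section
/- Let h > 0 and let (u_n)_{n ≥ 0} be a sequence of real numbers each equal to 0 or h, with u₀ = 0, not identically 0. For j, j' ∈ {0, h}, let N_{jj'}(N) be the number of indices 0 ≤ i < N with u_i = j and u_{i+1} = j', and assume the frequencies F₀₀, F_hh, F₀h, F_h0 exist, i.e., N_{jj'}(N)/N → F_{jj'} as N → ∞ for each pair. For each N let ℐ(Γ_N) = 2ℓ(Γ_N)/δ(Γ_N) be the inconstancy of the polygonal curve Γ_N through (0,u₀), …, (N,u_N). Then ℐ(Γ_N) converges as N → ∞, and the inconstancy of the sequence satisfies ℐ((u_n)) = F₀₀ + F_hh + √(1 + h²)(F₀h + F_h0) = 1 + (√(1 + h²) − 1)(F₀h + F_h0). -/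
noncomputable section
open MeasureTheory Real Set Filter
open scoped ENNReal

namespace PolyAux
open scoped NNReal

abbrev E2 := EuclideanSpace ℝ (Fin 2)

lemma pt_zero (x y : ℝ) : pt x y 0 = x := rfl
lemma pt_one (x y : ℝ) : pt x y 1 = y := rfl

lemma pt_combo (c d x y x' y' : ℝ) :
    c • pt x y + d • pt x' y' = pt (c*x+d*x') (c*y+d*y') := by
  ext i; fin_cases i <;> simp [pt]

lemma pt_eval (p : E2) : pt (p 0) (p 1) = p := by
  ext i; fin_cases i <;> rfl

lemma dist_pt (x y x' y' : ℝ) :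
    dist (pt x y) (pt x' y') = Real.sqrt ((x-x')^2 + (y-y')^2) := by
  rw [EuclideanSpace.dist_eq]
  simp [pt, Fin.sum_univ_two, Real.dist_eq, sq_abs]

lemma dist_coords (p q : E2) : dist p q = Real.sqrt ((p 0 - q 0)^2 + (p 1 - q 1)^2) := by
  rw [EuclideanSpace.dist_eq]
  simp [Fin.sum_univ_two, Real.dist_eq, sq_abs]

lemma lips_eval (i : Fin 2) : LipschitzWith 1 (fun p : E2 => p i) := by
  apply LipschitzWith.of_dist_le_mul
  intro p q
  rw [NNReal.coe_one, one_mul, EuclideanSpace.dist_eq]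
  have h1 : dist (p i) (q i) ^ 2 ≤ ∑ j, dist (p j) (q j) ^ 2 :=
    Finset.single_le_sum (f := fun j => dist (p j) (q j) ^ 2)
      (fun j _ => sq_nonneg _) (Finset.mem_univ i)
  calc dist (p i) (q i) = Real.sqrt (dist (p i) (q i) ^ 2) := by
        rw [Real.sqrt_sq dist_nonneg]
    _ ≤ _ := Real.sqrt_le_sqrt h1

lemma lips_vert (x : ℝ) : LipschitzWith 1 (fun y => pt x y) := by
  apply LipschitzWith.of_dist_le_mul
  intro y y'
  rw [NNReal.coe_one, one_mul, dist_pt]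
  simp [Real.dist_eq, Real.sqrt_sq_eq_abs]

lemma cont_pt (f g : ℝ → ℝ) (s : Set ℝ) (hf : ContinuousOn f s) (hg : ContinuousOn g s) :
    ContinuousOn (fun x => pt (f x) (g x)) s := by
  have : (fun x => pt (f x) (g x)) = fun x => f x • pt 1 0 + g x • pt 0 1 := by
    funext x; rw [pt_combo]; ring_nf
  rw [this]
  exact (hf.smul continuousOn_const).add (hg.smul continuousOn_const)

lemma cont_pt' (f g : ℝ → ℝ) (hf : Continuous f) (hg : Continuous g) :
    Continuous (fun x => pt (f x) (g x)) := by
  have : (fun x => pt (f x) (g x)) = fun x => f x • pt 1 0 + g x • pt 0 1 := by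
    funext x; rw [pt_combo]; ring_nf
  rw [this]
  exact (hf.smul continuous_const).add (hg.smul continuous_const)

/-- The top function of a set. -/
def fTop (K : Set E2) (x : ℝ) : ℝ := sSup {y | pt x y ∈ K}
/-- The bottom function of a set. -/
def gBot (K : Set E2) (x : ℝ) : ℝ := sInf {y | pt x y ∈ K}

/-- A convex compact set sitting in the box `[0,a] × [0,b]` with full horizontal extent. -/
structure Nice (K : Set E2) (a b : ℝ) : Prop where
  conv : Convex ℝ K
  comp : IsCompact K
  box : ∀ p ∈ K, p 0 ∈ Icc 0 a ∧ p 1 ∈ Icc 0 b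
  sl : ∀ x ∈ Icc 0 a, ∃ y, pt x y ∈ K
  ha : 0 ≤ a
  hb : 0 ≤ b

variable {K : Set E2} {a b : ℝ}

namespace Nice

lemma slice_sub (hN : Nice K a b) {x y : ℝ} (hy : pt x y ∈ K) : y ∈ Icc 0 b :=
  (hN.box _ hy).2

lemma x_mem (hN : Nice K a b) {x y : ℝ} (hy : pt x y ∈ K) : x ∈ Icc 0 a :=
  (hN.box _ hy).1

lemma isCompact_slice (hN : Nice K a b) (x : ℝ) : IsCompact {y | pt x y ∈ K} := by
  refine isCompact_Icc.of_isClosed_subset ?_ (fun y hy => hN.slice_sub hy)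
  exact IsClosed.preimage (cont_pt' (fun _ => x) id continuous_const continuous_id)
    hN.comp.isClosed

lemma slice_nonempty (hN : Nice K a b) {x : ℝ} (hx : x ∈ Icc 0 a) :
    {y | pt x y ∈ K}.Nonempty := hN.sl x hx

lemma bddAbove_slice (hN : Nice K a b) (x : ℝ) : BddAbove {y | pt x y ∈ K} :=
  ⟨b, fun _ hy => (hN.slice_sub hy).2⟩

lemma bddBelow_slice (hN : Nice K a b) (x : ℝ) : BddBelow {y | pt x y ∈ K} :=
  ⟨0, fun _ hy => (hN.slice_sub hy).1⟩

lemma fTop_mem (hN : Nice K a b) {x : ℝ} (hx : x ∈ Icc 0 a) : pt x (fTop K x) ∈ K :=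
  (hN.isCompact_slice x).sSup_mem (hN.slice_nonempty hx)

lemma gBot_mem (hN : Nice K a b) {x : ℝ} (hx : x ∈ Icc 0 a) : pt x (gBot K x) ∈ K :=
  (hN.isCompact_slice x).sInf_mem (hN.slice_nonempty hx)

lemma le_fTop (hN : Nice K a b) {x y : ℝ} (hy : pt x y ∈ K) : y ≤ fTop K x :=
  le_csSup (hN.bddAbove_slice x) hy

lemma gBot_le (hN : Nice K a b) {x y : ℝ} (hy : pt x y ∈ K) : gBot K x ≤ y :=
  csInf_le (hN.bddBelow_slice x) hy

lemma fTop_mem_Icc (hN : Nice K a b) {x : ℝ} (hx : x ∈ Icc 0 a) : fTop K x ∈ Icc 0 b :=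
  hN.slice_sub (hN.fTop_mem hx)

lemma gBot_mem_Icc (hN : Nice K a b) {x : ℝ} (hx : x ∈ Icc 0 a) : gBot K x ∈ Icc 0 b :=
  hN.slice_sub (hN.gBot_mem hx)

lemma fTop_concave (hN : Nice K a b) : ConcaveOn ℝ (Icc 0 a) (fTop K) := by
  refine ⟨convex_Icc 0 a, fun x hx y hy c d hc hd hcd => ?_⟩
  have hmem : pt (c*x+d*y) (c * fTop K x + d * fTop K y) ∈ K := by
    rw [← pt_combo]
    exact hN.conv (hN.fTop_mem hx) (hN.fTop_mem hy) hc hd hcd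
  have := hN.le_fTop hmem
  simpa [smul_eq_mul] using this

lemma gBot_convex (hN : Nice K a b) : ConvexOn ℝ (Icc 0 a) (gBot K) := by
  refine ⟨convex_Icc 0 a, fun x hx y hy c d hc hd hcd => ?_⟩
  have hmem : pt (c*x+d*y) (c * gBot K x + d * gBot K y) ∈ K := by
    rw [← pt_combo]
    exact hN.conv (hN.gBot_mem hx) (hN.gBot_mem hy) hc hd hcd
  have := hN.gBot_le hmem
  simpa [smul_eq_mul] using this

lemma fTop_mem_frontier (hN : Nice K a b) {x : ℝ} (hx : x ∈ Icc 0 a) :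
    pt x (fTop K x) ∈ frontier K := by
  rw [hN.comp.isClosed.frontier_eq]
  refine ⟨hN.fTop_mem hx, fun hint => ?_⟩
  obtain ⟨ε, hε, hball⟩ := Metric.isOpen_iff.1 isOpen_interior _ hint
  have hmem : pt x (fTop K x + ε/2) ∈ K := by
    apply interior_subset; apply hball
    rw [Metric.mem_ball, dist_pt]
    rw [show x - x = 0 by ring, show fTop K x + ε/2 - fTop K x = ε/2 by ring]
    rw [show (0:ℝ)^2 + (ε/2)^2 = (ε/2)^2 by ring, Real.sqrt_sq (by linarith)]
    linarith
  have := hN.le_fTop hmem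
  linarith

lemma gBot_mem_frontier (hN : Nice K a b) {x : ℝ} (hx : x ∈ Icc 0 a) :
    pt x (gBot K x) ∈ frontier K := by
  rw [hN.comp.isClosed.frontier_eq]
  refine ⟨hN.gBot_mem hx, fun hint => ?_⟩
  obtain ⟨ε, hε, hball⟩ := Metric.isOpen_iff.1 isOpen_interior _ hint
  have hmem : pt x (gBot K x - ε/2) ∈ K := by
    apply interior_subset; apply hball
    rw [Metric.mem_ball, dist_pt]
    rw [show x - x = 0 by ring, show gBot K x - ε/2 - gBot K x = -(ε/2) by ring]
    rw [show (0:ℝ)^2 + (-(ε/2))^2 = (ε/2)^2 by ring, Real.sqrt_sq (by linarith)]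
    linarith
  have := hN.gBot_le hmem
  linarith

lemma interior_coord (hN : Nice K a b) {p : E2} (hp : p ∈ interior K) :
    p 0 ∈ Ioo 0 a ∧ gBot K (p 0) < p 1 ∧ p 1 < fTop K (p 0) := by
  obtain ⟨ε, hε, hball⟩ := Metric.isOpen_iff.1 isOpen_interior _ hp
  have key : ∀ dx dy : ℝ, Real.sqrt (dx^2 + dy^2) < ε → pt (p 0 + dx) (p 1 + dy) ∈ K := by
    intro dx dy hd
    apply interior_subset; apply hball
    rw [Metric.mem_ball, dist_coords]
    have h' : (pt (p 0 + dx) (p 1 + dy) 0 - p 0)^2 + (pt (p 0 + dx) (p 1 + dy) 1 - p 1)^2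
        = dx^2 + dy^2 := by simp [pt]
    rw [h']; exact hd
  have hd0 : ∀ c : ℝ, |c| < ε → Real.sqrt (c^2 + 0^2) < ε ∧ Real.sqrt (0^2 + c^2) < ε := by
    intro c hc
    constructor <;> [rw [show c^2+(0:ℝ)^2 = c^2 by ring]; rw [show (0:ℝ)^2+c^2 = c^2 by ring]] <;>
      rw [Real.sqrt_sq_eq_abs] <;> exact hc
  have habs : |ε/2| < ε := by rw [abs_of_pos (by linarith)]; linarith
  have h1 := key (ε/2) 0 (hd0 _ habs).1
  have h2 := key (-(ε/2)) 0 (by rw [show (-(ε/2))^2 = (ε/2)^2 by ring]; exact (hd0 _ habs).1)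
  have h3 := key 0 (ε/2) (hd0 _ habs).2
  have h4 := key 0 (-(ε/2)) (by rw [show (-(ε/2))^2 = (ε/2)^2 by ring]; exact (hd0 _ habs).2)
  have b1 := (hN.x_mem h1).2
  have b2 := (hN.x_mem h2).1
  have b3 := hN.le_fTop (by simpa using h3)
  have b4 := hN.gBot_le (by simpa using h4)
  exact ⟨⟨by linarith, by linarith⟩, by linarith, by linarith⟩

lemma le_on_K (hN : Nice K a b) {φ : E2 →L[ℝ] ℝ} {c : ℝ} {z₀ : E2} (hz₀ : z₀ ∈ interior K)
    (hφ : ∀ z ∈ interior K, φ z < c) : ∀ z ∈ K, φ z ≤ c := by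
  intro z hz
  have hcomb : ∀ t ∈ Ioo (0:ℝ) 1, φ (t • z₀ + (1-t) • z) ≤ c := by
    intro t ht
    exact le_of_lt (hφ _ (hN.conv.combo_interior_closure_mem_interior hz₀
      (subset_closure hz) ht.1 (by linarith [ht.2]) (by ring)))
  have hev : ∀ᶠ t in nhdsWithin (0:ℝ) (Ioi 0), φ (t • z₀ + (1-t) • z) ≤ c := by
    filter_upwards [Ioo_mem_nhdsGT_of_mem (show (0:ℝ) ∈ Ico (0:ℝ) 1 by norm_num)] with t ht
    exact hcomb t ht
  have hcont : Tendsto (fun t : ℝ => φ (t • z₀ + (1-t) • z)) (nhdsWithin 0 (Ioi 0))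
      (nhds (φ ((0:ℝ) • z₀ + (1-(0:ℝ)) • z))) := by
    apply Tendsto.mono_left _ nhdsWithin_le_nhds
    exact (φ.continuous.comp (((continuous_id.smul continuous_const)).add
      ((continuous_const.sub continuous_id).smul continuous_const))).tendsto 0
  have := le_of_tendsto hcont hev
  simpa using this

lemma mem_interior_of_between (hN : Nice K a b) (hint : (interior K).Nonempty)
    {x y : ℝ} (hx : x ∈ Ioo 0 a) (h1 : gBot K x < y) (h2 : y < fTop K x) :
    pt x y ∈ interior K := by
  by_contra hni
  obtain ⟨φ, hφ⟩ := geometric_hahn_banach_open_point hN.conv.interior isOpen_interior hni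
  obtain ⟨z₀, hz₀⟩ := hint
  have hle := hN.le_on_K hz₀ hφ
  have hxIcc : x ∈ Icc 0 a := ⟨hx.1.le, hx.2.le⟩
  obtain ⟨A, B, hval⟩ : ∃ A B : ℝ, ∀ s t : ℝ, φ (pt s t) = s * A + t * B := by
    refine ⟨φ (pt 1 0), φ (pt 0 1), fun s t => ?_⟩
    have hpt : pt s t = s • pt 1 0 + t • pt 0 1 := by rw [pt_combo]; ring_nf
    rw [hpt, φ.map_add, φ.map_smul, φ.map_smul, smul_eq_mul, smul_eq_mul]
  obtain ⟨y₀, hy₀⟩ := hN.sl 0 ⟨le_refl 0, hN.ha⟩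
  obtain ⟨y₁, hy₁⟩ := hN.sl a ⟨hN.ha, le_refl a⟩
  have t1 := hle _ (hN.fTop_mem hxIcc)
  have t2 := hle _ (hN.gBot_mem hxIcc)
  have t3 := hle _ hy₀
  have t4 := hle _ hy₁
  have t5 := hφ z₀ hz₀
  rw [← pt_eval z₀] at t5
  simp only [hval] at t1 t2 t3 t4 t5
  have hB1 : B ≤ 0 := by nlinarith
  have hB2 : 0 ≤ B := by nlinarith
  have hB : B = 0 := le_antisymm hB1 hB2
  rw [hB] at t3 t4
  have hx1 := hx.1; have hx2 := hx.2
  have hA1 : A ≤ 0 := by nlinarith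
  have hA2 : 0 ≤ A := by nlinarith
  have hA : A = 0 := le_antisymm hA1 hA2
  rw [hA, hB] at t5
  linarith

lemma fTop_gt_gBot (hN : Nice K a b) (hint : (interior K).Nonempty)
    {x : ℝ} (hx : x ∈ Ioo 0 a) : gBot K x < fTop K x := by
  obtain ⟨z₀, hz₀⟩ := hint
  obtain ⟨hx₀, hg₀, hf₀⟩ := hN.interior_coord hz₀
  set x₀ := z₀ 0
  have hpos : gBot K x₀ < fTop K x₀ := lt_trans hg₀ hf₀
  have hge : ∀ z ∈ Icc 0 a, gBot K z ≤ fTop K z := by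
    intro z hz
    obtain ⟨y, hy⟩ := hN.sl z hz
    exact le_trans (hN.gBot_le hy) (hN.le_fTop hy)
  rcases eq_or_ne x x₀ with rfl | hne
  · exact hpos
  have hf := hN.fTop_concave
  have hg := hN.gBot_convex
  have hxIcc : x ∈ Icc 0 a := ⟨hx.1.le, hx.2.le⟩
  have hx₀Icc : x₀ ∈ Icc 0 a := ⟨hx₀.1.le, hx₀.2.le⟩
  rcases lt_or_gt_of_ne hne with hlt | hgt
  · -- x < x₀ : x = (1-t)•0 + t•x₀ with t = x/x₀ ∈ (0,1)
    set t := x / x₀ with htdef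
    have hx₀pos : 0 < x₀ := hx₀.1
    have ht : 0 < t := div_pos hx.1 hx₀pos
    have ht1 : t < 1 := (div_lt_one hx₀pos).2 hlt
    have hxeq : (1-t) • (0:ℝ) + t • x₀ = x := by
      rw [smul_eq_mul, smul_eq_mul, htdef]
      field_simp
      ring
    have hcf := hf.2 (⟨le_refl 0, hN.ha⟩ : (0:ℝ) ∈ Icc 0 a) hx₀Icc
      (by linarith : (0:ℝ) ≤ 1 - t) ht.le (by ring)
    have hcg := hg.2 (⟨le_refl 0, hN.ha⟩ : (0:ℝ) ∈ Icc 0 a) hx₀Icc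
      (by linarith : (0:ℝ) ≤ 1 - t) ht.le (by ring)
    rw [hxeq] at hcf hcg
    have h0 := hge 0 ⟨le_refl 0, hN.ha⟩
    simp only [smul_eq_mul] at hcf hcg
    nlinarith
  · -- x₀ < x : x = (1-t)•x₀ + t•a with t = (x-x₀)/(a-x₀) ∈ (0,1)
    set t := (x - x₀) / (a - x₀) with htdef
    have hden : 0 < a - x₀ := by linarith [hx₀.2]
    have ht : 0 < t := div_pos (by linarith) hden
    have ht1 : t < 1 := (div_lt_one hden).2 (by linarith [hx.2])
    have hxeq : (1-t) • x₀ + t • a = x := by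
      rw [smul_eq_mul, smul_eq_mul, htdef]
      field_simp
      ring
    have hcf := hf.2 hx₀Icc (⟨hN.ha, le_refl a⟩ : a ∈ Icc 0 a)
      (by linarith : (0:ℝ) ≤ 1 - t) ht.le (by ring)
    have hcg := hg.2 hx₀Icc (⟨hN.ha, le_refl a⟩ : a ∈ Icc 0 a)
      (by linarith : (0:ℝ) ≤ 1 - t) ht.le (by ring)
    rw [hxeq] at hcf hcg
    have h0 := hge a ⟨hN.ha, le_refl a⟩
    simp only [smul_eq_mul] at hcf hcg
    nlinarith

/-- Frontier of a nice set is contained in top graph, bottom graph and two vertical sides. -/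
lemma frontier_subset (hN : Nice K a b) (hint : (interior K).Nonempty) :
    frontier K ⊆ (fun x => pt x (fTop K x)) '' Icc 0 a ∪ (fun x => pt x (gBot K x)) '' Icc 0 a
      ∪ (fun y => pt 0 y) '' Icc 0 b ∪ (fun y => pt a y) '' Icc 0 b := by
  intro p hp
  rw [hN.comp.isClosed.frontier_eq] at hp
  obtain ⟨hpK, hpni⟩ := hp
  have hxm : p 0 ∈ Icc 0 a := (hN.box p hpK).1
  have hym : p 1 ∈ Icc 0 b := (hN.box p hpK).2
  have hppt : pt (p 0) (p 1) ∈ K := by rw [pt_eval]; exact hpK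
  rcases eq_or_lt_of_le hxm.1 with h0 | h0
  · refine Or.inl (Or.inr ⟨p 1, hym, ?_⟩)
    show pt 0 (p 1) = p
    have := pt_eval p; rw [← h0] at this; exact this
  rcases eq_or_lt_of_le hxm.2 with hA | hA
  · refine Or.inr ⟨p 1, hym, ?_⟩
    show pt a (p 1) = p
    have := pt_eval p; rw [hA] at this; exact this
  have hf := hN.le_fTop hppt
  have hg := hN.gBot_le hppt
  rcases eq_or_lt_of_le hf with hf' | hf'
  · refine Or.inl (Or.inl (Or.inl ⟨p 0, hxm, ?_⟩))
    show pt (p 0) (fTop K (p 0)) = p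
    rw [← hf', pt_eval]
  rcases eq_or_lt_of_le hg with hg' | hg'
  · refine Or.inl (Or.inl (Or.inr ⟨p 0, hxm, ?_⟩))
    show pt (p 0) (gBot K (p 0)) = p
    rw [hg', pt_eval]
  exfalso
  apply hpni
  have := hN.mem_interior_of_between hint ⟨h0, hA⟩ hg' hf'
  rwa [pt_eval] at this

end Nice

/-- `H¹` of the graph of a monotone function with values in `[0,B]` over `s ⊆ [c,d]`. -/
lemma graph_meas_mono {f : ℝ → ℝ} {s : Set ℝ} {c d B : ℝ} (hs : s ⊆ Icc c d)
    (hmono : MonotoneOn f s) (hrange : ∀ x ∈ s, f x ∈ Icc 0 B) :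
    μH[1] ((fun x => pt x (f x)) '' s) ≤ ENNReal.ofReal (d - c + B) := by
  classical
  set g : ℝ → ℝ := fun x => x + f x with hg
  have hsm : StrictMonoOn g s := by
    intro x hx x' hx' hlt
    have := hmono hx hx' hlt.le
    simp only [hg]
    linarith
  have hinj : InjOn g s := hsm.injOn
  set σ : ℝ → ℝ := Function.invFunOn g s with hσ
  have hσg : ∀ x ∈ s, σ (g x) = x := fun x hx => hinj.leftInvOn_invFunOn hx
  set ψ : ℝ → E2 := fun t => pt (σ t) (f (σ t)) with hψ
  have himg : (fun x => pt x (f x)) '' s = ψ '' (g '' s) := by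
    rw [Set.image_image]
    apply Set.image_congr
    intro x hx
    simp only [ψ]
    rw [hσg x hx]
  have hlip : LipschitzOnWith 1 ψ (g '' s) := by
    apply LipschitzOnWith.of_dist_le_mul
    rintro t ⟨x, hx, rfl⟩ t' ⟨x', hx', rfl⟩
    rw [NNReal.coe_one, one_mul]
    simp only [ψ]
    rw [hσg x hx, hσg x' hx', dist_pt, Real.dist_eq]
    rcases le_total x x' with hle | hle
    · have h1 := hmono hx hx' hle
      have h2 : Real.sqrt ((x-x')^2 + (f x - f x')^2) ≤ (x' - x) + (f x' - f x) := by
        rw [show (x-x')^2 + (f x - f x')^2 = (x'-x)^2 + (f x' - f x)^2 by ring]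
        calc Real.sqrt ((x'-x)^2 + (f x' - f x)^2)
            ≤ Real.sqrt (((x'-x) + (f x' - f x))^2) := by
              apply Real.sqrt_le_sqrt; nlinarith
          _ = (x'-x) + (f x' - f x) := Real.sqrt_sq (by linarith)
      have h3 : |g x - g x'| = (x' - x) + (f x' - f x) := by
        rw [abs_sub_comm, abs_of_nonneg (by simp only [hg]; linarith)]
        simp only [hg]; ring
      rw [h3]; exact h2
    · have h1 := hmono hx' hx hle
      have h2 : Real.sqrt ((x-x')^2 + (f x - f x')^2) ≤ (x - x') + (f x - f x') := by
        calc Real.sqrt ((x-x')^2 + (f x - f x')^2)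
            ≤ Real.sqrt (((x-x') + (f x - f x'))^2) := by
              apply Real.sqrt_le_sqrt; nlinarith
          _ = (x-x') + (f x - f x') := Real.sqrt_sq (by linarith)
      have h3 : |g x - g x'| = (x - x') + (f x - f x') := by
        rw [abs_of_nonneg (by simp only [hg]; linarith)]
        simp only [hg]; ring
      rw [h3]; exact h2
  calc μH[1] ((fun x => pt x (f x)) '' s) = μH[1] (ψ '' (g '' s)) := by rw [himg]
    _ ≤ (1:ℝ≥0) ^ (1:ℝ) * μH[1] (g '' s) := hlip.hausdorffMeasure_image_le zero_le_one
    _ = μH[1] (g '' s) := by simp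
    _ ≤ μH[1] (Icc c (d + B)) := by
        apply measure_mono
        rintro t ⟨x, hx, rfl⟩
        have h1 := hs hx
        have h2 := hrange x hx
        simp only [hg]
        exact ⟨by linarith [h1.1, h2.1], by linarith [h1.2, h2.2]⟩
    _ = ENNReal.ofReal (d + B - c) := by
        rw [MeasureTheory.hausdorffMeasure_real, Real.volume_Icc]
    _ = ENNReal.ofReal (d - c + B) := by ring_nf

/-- Antitone version, via the reflection `(x,y) ↦ (-x,y)`. -/
lemma graph_meas_anti {f : ℝ → ℝ} {s : Set ℝ} {c d B : ℝ} (hs : s ⊆ Icc c d)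
    (hanti : AntitoneOn f s) (hrange : ∀ x ∈ s, f x ∈ Icc 0 B) :
    μH[1] ((fun x => pt x (f x)) '' s) ≤ ENNReal.ofReal (d - c + B) := by
  set r : E2 → E2 := fun p => pt (-(p 0)) (p 1) with hr
  have hrlip : LipschitzWith 1 r := by
    apply LipschitzWith.of_dist_le_mul
    intro p q
    rw [NNReal.coe_one, one_mul]
    simp only [hr]
    rw [dist_pt, dist_coords]
    apply le_of_eq
    congr 1
    simp [pt]
    ring
  have hkey : (fun x => pt x (f x)) '' s = r '' ((fun x => pt x ((f ∘ Neg.neg) x)) '' (Neg.neg '' s)) := by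
    rw [Set.image_image, Set.image_image]
    apply Set.image_congr
    intro x hx
    simp only [r, Function.comp]
    rw [show (-(-x)) = x by ring]
    congr 1 <;> simp [pt]
  have hmono : MonotoneOn (f ∘ Neg.neg) (Neg.neg '' s) := by
    rintro x ⟨x', hx', rfl⟩ y ⟨y', hy', rfl⟩ hle
    simp only [Function.comp, neg_neg]
    exact hanti hy' hx' (by linarith)
  have hsub : Neg.neg '' s ⊆ Icc (-d) (-c) := by
    rintro x ⟨x', hx', rfl⟩
    have := hs hx'
    exact ⟨by linarith [this.2], by linarith [this.1]⟩
  have hrange' : ∀ x ∈ Neg.neg '' s, (f ∘ Neg.neg) x ∈ Icc 0 B := by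
    rintro x ⟨x', hx', rfl⟩
    simp only [Function.comp, neg_neg]
    exact hrange x' hx'
  calc μH[1] ((fun x => pt x (f x)) '' s)
      = μH[1] (r '' ((fun x => pt x ((f ∘ Neg.neg) x)) '' (Neg.neg '' s))) := by rw [hkey]
    _ ≤ (1:ℝ≥0) ^ (1:ℝ) * μH[1] ((fun x => pt x ((f ∘ Neg.neg) x)) '' (Neg.neg '' s)) :=
        hrlip.hausdorffMeasure_image_le zero_le_one _
    _ = μH[1] ((fun x => pt x ((f ∘ Neg.neg) x)) '' (Neg.neg '' s)) := by simp
    _ ≤ ENNReal.ofReal ((-c) - (-d) + B) := graph_meas_mono hsub hmono hrange'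
    _ = ENNReal.ofReal (d - c + B) := by ring_nf

/-- Vertical segment measure bound. -/
lemma vert_meas (x b : ℝ) : μH[1] ((fun y => pt x y) '' Icc 0 b) ≤ ENNReal.ofReal b := by
  calc μH[1] ((fun y => pt x y) '' Icc 0 b) ≤ (1:ℝ≥0) ^ (1:ℝ) * μH[1] (Icc (0:ℝ) b) :=
      (lips_vert x).hausdorffMeasure_image_le zero_le_one _
    _ = μH[1] (Icc (0:ℝ) b) := by simp
    _ = ENNReal.ofReal b := by
        rw [MeasureTheory.hausdorffMeasure_real, Real.volume_Icc]; norm_num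

/-- A concave function with max at `m` is monotone left of `m`. -/
lemma concave_mono_left {f : ℝ → ℝ} {a m : ℝ} (hf : ConcaveOn ℝ (Icc 0 a) f)
    (hm : m ∈ Icc 0 a) (hmax : ∀ x ∈ Icc 0 a, f x ≤ f m) :
    MonotoneOn f (Icc 0 m) := by
  intro x hx x' hx' hle
  have hxI : x ∈ Icc 0 a := ⟨hx.1, le_trans hx.2 hm.2⟩
  have hx'I : x' ∈ Icc 0 a := ⟨hx'.1, le_trans hx'.2 hm.2⟩
  rcases eq_or_lt_of_le (le_trans hx'.2 (le_refl m)) with heq | hlt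
  · -- x' = m
    subst heq; exact hmax x hxI
  rcases eq_or_lt_of_le hle with rfl | hlt2
  · exact le_refl _
  -- x < x' < m : x' = (1-t) x + t m with t = (x'-x)/(m-x)
  set t := (x' - x) / (m - x) with htd
  have hmx : 0 < m - x := by linarith [hx'.2]
  have ht0 : 0 < t := div_pos (by linarith) hmx
  have ht1 : t < 1 := (div_lt_one hmx).2 (by linarith)
  have hxeq : (1-t) • x + t • m = x' := by
    rw [smul_eq_mul, smul_eq_mul, htd]; field_simp; ring
  have hc := hf.2 hxI hm (by linarith : (0:ℝ) ≤ 1 - t) ht0.le (by ring)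
  rw [hxeq] at hc
  have := hmax x hxI
  simp only [smul_eq_mul] at hc
  nlinarith

lemma concave_anti_right {f : ℝ → ℝ} {a m : ℝ} (hf : ConcaveOn ℝ (Icc 0 a) f)
    (hm : m ∈ Icc 0 a) (hmax : ∀ x ∈ Icc 0 a, f x ≤ f m) :
    AntitoneOn f (Icc m a) := by
  intro x hx x' hx' hle
  have hxI : x ∈ Icc 0 a := ⟨le_trans hm.1 hx.1, hx.2⟩
  have hx'I : x' ∈ Icc 0 a := ⟨le_trans hm.1 hx'.1, hx'.2⟩
  rcases eq_or_lt_of_le hx.1 with heq | hlt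
  · -- x = m
    rw [← heq]; exact hmax x' hx'I
  rcases eq_or_lt_of_le hle with rfl | hlt2
  · exact le_refl _
  -- m < x < x' : x = (1-t) m + t x' with t = (x-m)/(x'-m)
  set t := (x - m) / (x' - m) with htd
  have hxm : 0 < x' - m := by linarith
  have ht0 : 0 < t := div_pos (by linarith) hxm
  have ht1 : t < 1 := (div_lt_one hxm).2 (by linarith)
  have hxeq : (1-t) • m + t • x' = x := by
    rw [smul_eq_mul, smul_eq_mul, htd]; field_simp; ring
  have hc := hf.2 hm hx'I (by linarith : (0:ℝ) ≤ 1 - t) ht0.le (by ring)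
  rw [hxeq] at hc
  have := hmax x' hx'I
  simp only [smul_eq_mul] at hc
  nlinarith

namespace Nice

variable {K : Set E2} {a b : ℝ}

lemma nonemptyK (hN : Nice K a b) : K.Nonempty := by
  obtain ⟨y, hy⟩ := hN.sl 0 ⟨le_refl 0, hN.ha⟩
  exact ⟨_, hy⟩

lemma exists_fTop_max (hN : Nice K a b) :
    ∃ m ∈ Icc 0 a, ∀ x ∈ Icc 0 a, fTop K x ≤ fTop K (m : ℝ) := by
  obtain ⟨q, hq, hmax⟩ := hN.comp.exists_isMaxOn hN.nonemptyK
    ((lips_eval 1).continuous.continuousOn)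
  refine ⟨q 0, (hN.box q hq).1, fun x hx => ?_⟩
  have h1 : fTop K x ≤ q 1 := hmax (hN.fTop_mem hx)
  have h2 : q 1 ≤ fTop K (q 0) := by
    apply hN.le_fTop
    rw [pt_eval]; exact hq
  linarith

lemma exists_gBot_min (hN : Nice K a b) :
    ∃ m ∈ Icc 0 a, ∀ x ∈ Icc 0 a, gBot K (m : ℝ) ≤ gBot K x := by
  obtain ⟨q, hq, hmin⟩ := hN.comp.exists_isMinOn hN.nonemptyK
    ((lips_eval 1).continuous.continuousOn)
  refine ⟨q 0, (hN.box q hq).1, fun x hx => ?_⟩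
  have h1 : q 1 ≤ gBot K x := hmin (hN.gBot_mem hx)
  have h2 : gBot K (q 0) ≤ q 1 := by
    apply hN.gBot_le
    rw [pt_eval]; exact hq
  linarith

lemma fTop_graph_meas (hN : Nice K a b) :
    μH[1] ((fun x => pt x (fTop K x)) '' Icc 0 a) ≤ ENNReal.ofReal (a + 2*b) := by
  obtain ⟨m, hm, hmax⟩ := hN.exists_fTop_max
  have hsplit : Icc 0 a = Icc 0 m ∪ Icc m a := (Icc_union_Icc_eq_Icc hm.1 hm.2).symm
  rw [hsplit, Set.image_union]
  have h1 : μH[1] ((fun x => pt x (fTop K x)) '' Icc 0 m) ≤ ENNReal.ofReal (m + b) := by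
    have := graph_meas_mono (f := fTop K) (le_refl (Icc 0 m))
      (concave_mono_left hN.fTop_concave hm hmax)
      (fun x hx => hN.fTop_mem_Icc ⟨hx.1, le_trans hx.2 hm.2⟩)
    simpa using this
  have h2 : μH[1] ((fun x => pt x (fTop K x)) '' Icc m a) ≤ ENNReal.ofReal (a - m + b) := by
    exact graph_meas_anti (le_refl (Icc m a))
      (concave_anti_right hN.fTop_concave hm hmax)
      (fun x hx => hN.fTop_mem_Icc ⟨le_trans hm.1 hx.1, hx.2⟩)
  calc μH[1] (_ ∪ _) ≤ _ + _ := measure_union_le _ _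
    _ ≤ ENNReal.ofReal (m + b) + ENNReal.ofReal (a - m + b) := add_le_add h1 h2
    _ = ENNReal.ofReal (a + 2*b) := by
        rw [← ENNReal.ofReal_add (by linarith [hm.1, hN.hb] : (0:ℝ) ≤ m + b)
          (by linarith [hm.2, hN.hb] : (0:ℝ) ≤ a - m + b)]
        ring_nf

lemma gBot_graph_meas (hN : Nice K a b) :
    μH[1] ((fun x => pt x (gBot K x)) '' Icc 0 a) ≤ ENNReal.ofReal (a + 2*b) := by
  obtain ⟨m, hm, hmin⟩ := hN.exists_gBot_min
  have hconc : ConcaveOn ℝ (Icc 0 a) (fun x => - gBot K x) := hN.gBot_convex.neg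
  have hmax : ∀ x ∈ Icc 0 a, - gBot K x ≤ - gBot K m := fun x hx => by
    have := hmin x hx; linarith
  have hsplit : Icc 0 a = Icc 0 m ∪ Icc m a := (Icc_union_Icc_eq_Icc hm.1 hm.2).symm
  rw [hsplit, Set.image_union]
  have hanti : AntitoneOn (gBot K) (Icc 0 m) := by
    intro x hx y hy hle
    have := concave_mono_left hconc hm hmax hx hy hle
    simpa using this
  have hmono : MonotoneOn (gBot K) (Icc m a) := by
    intro x hx y hy hle
    have := concave_anti_right hconc hm hmax hx hy hle
    simpa using this
  have h1 : μH[1] ((fun x => pt x (gBot K x)) '' Icc 0 m) ≤ ENNReal.ofReal (m + b) := by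
    have := graph_meas_anti (f := gBot K) (le_refl (Icc 0 m)) hanti
      (fun x hx => hN.gBot_mem_Icc ⟨hx.1, le_trans hx.2 hm.2⟩)
    simpa using this
  have h2 : μH[1] ((fun x => pt x (gBot K x)) '' Icc m a) ≤ ENNReal.ofReal (a - m + b) :=
    graph_meas_mono (le_refl (Icc m a)) hmono
      (fun x hx => hN.gBot_mem_Icc ⟨le_trans hm.1 hx.1, hx.2⟩)
  calc μH[1] (_ ∪ _) ≤ _ + _ := measure_union_le _ _
    _ ≤ ENNReal.ofReal (m + b) + ENNReal.ofReal (a - m + b) := add_le_add h1 h2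
    _ = ENNReal.ofReal (a + 2*b) := by
        rw [← ENNReal.ofReal_add (by linarith [hm.1, hN.hb] : (0:ℝ) ≤ m + b)
          (by linarith [hm.2, hN.hb] : (0:ℝ) ≤ a - m + b)]
        ring_nf

/-- Upper bound for the perimeter. -/
lemma perim_upper (hN : Nice K a b) (hint : (interior K).Nonempty) :
    μH[1] (frontier K) ≤ ENNReal.ofReal (2*a + 6*b) := by
  calc μH[1] (frontier K)
      ≤ μH[1] ((fun x => pt x (fTop K x)) '' Icc 0 a ∪ (fun x => pt x (gBot K x)) '' Icc 0 a
          ∪ (fun y => pt 0 y) '' Icc 0 b ∪ (fun y => pt a y) '' Icc 0 b) :=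
        measure_mono (hN.frontier_subset hint)
    _ ≤ μH[1] ((fun x => pt x (fTop K x)) '' Icc 0 a ∪ (fun x => pt x (gBot K x)) '' Icc 0 a
          ∪ (fun y => pt 0 y) '' Icc 0 b) + μH[1] ((fun y => pt a y) '' Icc 0 b) :=
        measure_union_le _ _
    _ ≤ (μH[1] ((fun x => pt x (fTop K x)) '' Icc 0 a ∪ (fun x => pt x (gBot K x)) '' Icc 0 a)
          + μH[1] ((fun y => pt 0 y) '' Icc 0 b)) + μH[1] ((fun y => pt a y) '' Icc 0 b) :=
        add_le_add (measure_union_le _ _) le_rfl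
    _ ≤ ((μH[1] ((fun x => pt x (fTop K x)) '' Icc 0 a)
          + μH[1] ((fun x => pt x (gBot K x)) '' Icc 0 a))
          + μH[1] ((fun y => pt 0 y) '' Icc 0 b)) + μH[1] ((fun y => pt a y) '' Icc 0 b) :=
        add_le_add (add_le_add (measure_union_le _ _) le_rfl) le_rfl
    _ ≤ ((ENNReal.ofReal (a + 2*b) + ENNReal.ofReal (a + 2*b)) + ENNReal.ofReal b)
          + ENNReal.ofReal b :=
        add_le_add (add_le_add (add_le_add hN.fTop_graph_meas hN.gBot_graph_meas)
          (vert_meas 0 b)) (vert_meas a b)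
    _ = ENNReal.ofReal (2*a + 6*b) := by
        have h1 : (0:ℝ) ≤ a + 2*b := by linarith [hN.ha, hN.hb]
        rw [← ENNReal.ofReal_add h1 h1, ← ENNReal.ofReal_add (by linarith [hN.hb]) hN.hb,
          ← ENNReal.ofReal_add (by linarith [hN.hb]) hN.hb]
        ring_nf

/-- Lower bound for the perimeter. -/
lemma perim_lower (hN : Nice K a b) (hint : (interior K).Nonempty) (ha2 : 2 < a) :
    ENNReal.ofReal (2*a - 4) ≤ μH[1] (frontier K) := by
  have hsub : Icc (1:ℝ) (a-1) ⊆ Ioo 0 a := fun x hx => ⟨by linarith [hx.1], by linarith [hx.2]⟩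
  have hsubI : Icc (1:ℝ) (a-1) ⊆ Icc 0 a := fun x hx => ⟨by linarith [hx.1], by linarith [hx.2]⟩
  set T := (fun x => pt x (fTop K x)) '' Icc (1:ℝ) (a-1) with hT
  set Bs := (fun x => pt x (gBot K x)) '' Icc (1:ℝ) (a-1) with hBs
  have hTf : T ⊆ frontier K := by
    rintro p ⟨x, hx, rfl⟩; exact hN.fTop_mem_frontier (hsubI hx)
  have hBf : Bs ⊆ frontier K := by
    rintro p ⟨x, hx, rfl⟩; exact hN.gBot_mem_frontier (hsubI hx)
  -- continuity
  have hfc : ContinuousOn (fTop K) (Ioo 0 a) := by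
    have h1 : ConcaveOn ℝ (Ioo 0 a) (fTop K) := hN.fTop_concave.subset Ioo_subset_Icc_self (convex_Ioo 0 a)
    have := h1.neg.continuousOn isOpen_Ioo
    simpa using this.neg
  have hgc : ContinuousOn (gBot K) (Ioo 0 a) := by
    have h1 : ConvexOn ℝ (Ioo 0 a) (gBot K) := hN.gBot_convex.subset Ioo_subset_Icc_self (convex_Ioo 0 a)
    exact h1.continuousOn isOpen_Ioo
  have hTc : IsCompact T := by
    apply isCompact_Icc.image_of_continuousOn
    exact cont_pt _ _ _ continuousOn_id ((hfc.mono hsub))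
  have hBc : IsCompact Bs := by
    apply isCompact_Icc.image_of_continuousOn
    exact cont_pt _ _ _ continuousOn_id ((hgc.mono hsub))
  have hdisj : Disjoint T Bs := by
    rw [Set.disjoint_left]
    rintro p ⟨x, hx, rfl⟩ ⟨x', hx', heq⟩
    have h0 : x' = x := by
      have := congrArg (fun q : E2 => q 0) heq
      simpa [pt] using this
    subst h0
    have h1 : gBot K x' = fTop K x' := by
      have := congrArg (fun q : E2 => q 1) heq
      simpa [pt] using this
    have := hN.fTop_gt_gBot hint (hsub hx)
    rw [h1] at this
    exact lt_irrefl _ this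
  have hproj : ∀ (f : ℝ → ℝ), (fun q : E2 => q 0) '' ((fun x => pt x (f x)) '' Icc (1:ℝ) (a-1))
      = Icc (1:ℝ) (a-1) := by
    intro f
    rw [Set.image_image]
    have : (fun x => pt x (f x) 0) = id := by funext x; rfl
    rw [this, Set.image_id]
  have hTm : ENNReal.ofReal (a - 2) ≤ μH[1] T := by
    have h1 : μH[1] ((fun q : E2 => q 0) '' T) ≤ (1:ℝ≥0) ^ (1:ℝ) * μH[1] T :=
      (lips_eval 0).hausdorffMeasure_image_le zero_le_one T
    rw [hT, hproj] at h1
    rw [MeasureTheory.hausdorffMeasure_real, Real.volume_Icc] at h1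
    simpa [show a - 1 - 1 = a - 2 by ring] using h1
  have hBm : ENNReal.ofReal (a - 2) ≤ μH[1] Bs := by
    have h1 : μH[1] ((fun q : E2 => q 0) '' Bs) ≤ (1:ℝ≥0) ^ (1:ℝ) * μH[1] Bs :=
      (lips_eval 0).hausdorffMeasure_image_le zero_le_one Bs
    rw [hBs, hproj] at h1
    rw [MeasureTheory.hausdorffMeasure_real, Real.volume_Icc] at h1
    simpa [show a - 1 - 1 = a - 2 by ring] using h1
  calc ENNReal.ofReal (2*a - 4) = ENNReal.ofReal (a-2) + ENNReal.ofReal (a-2) := by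
        rw [← ENNReal.ofReal_add (by linarith) (by linarith)]; ring_nf
    _ ≤ μH[1] T + μH[1] Bs := add_le_add hTm hBm
    _ = μH[1] (T ∪ Bs) := (measure_union hdisj hBc.isClosed.measurableSet).symm
    _ ≤ μH[1] (frontier K) := measure_mono (Set.union_subset hTf hBf)

end Nice
section App

variable (u : ℕ → ℝ)

/-- The vertices of the polygonal curve. -/
def ptsSet (N : ℕ) : Set E2 := (fun i : ℕ => pt i (u i)) '' Set.Iic N

lemma ptsSet_finite (N : ℕ) : (ptsSet u N).Finite := (Set.finite_Iic N).image _

lemma hull_eq {N : ℕ} (hN : 1 ≤ N) :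
    convexHull ℝ (polyCurve u N) = convexHull ℝ (ptsSet u N) := by
  apply le_antisymm
  · apply convexHull_min _ (convex_convexHull ℝ _)
    intro p hp
    simp only [polyCurve, Set.mem_iUnion, Finset.mem_range] at hp
    obtain ⟨i, hi, hp⟩ := hp
    have h1 : pt i (u i) ∈ ptsSet u N := ⟨i, Set.mem_Iic.2 (by omega), rfl⟩
    have h2 : pt (i+1 : ℝ) (u (i+1)) ∈ ptsSet u N := by
      refine ⟨i+1, Set.mem_Iic.2 (by omega), ?_⟩
      push_cast
      rfl
    exact (convex_convexHull ℝ _).segment_subset (subset_convexHull ℝ _ h1)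
      (subset_convexHull ℝ _ h2) hp
  · apply convexHull_min _ (convex_convexHull ℝ _)
    rintro p ⟨i, hi, rfl⟩
    apply subset_convexHull
    simp only [polyCurve, Set.mem_iUnion, Finset.mem_range]
    rw [Set.mem_Iic] at hi
    rcases eq_or_lt_of_le hi with rfl | hlt
    · refine ⟨i - 1, by omega, ?_⟩
      have hco : ((i - 1 : ℕ) : ℝ) + 1 = (i : ℝ) := by
        rw [Nat.cast_sub hN]; ring
      have h2 : i - 1 + 1 = i := by omega
      rw [hco, h2]
      exact right_mem_segment ℝ _ _
    · exact ⟨i, hlt, left_mem_segment ℝ _ _⟩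

variable {h : ℝ}

lemma nice_hull (hh : 0 < h) (hvals : ∀ n, u n = 0 ∨ u n = h) (hu0 : u 0 = 0)
    {N : ℕ} (hN : 1 ≤ N) : Nice (convexHull ℝ (ptsSet u N)) N h := by
  have hNpos : (0:ℝ) < N := by exact_mod_cast hN
  have hbox : Convex ℝ {p : E2 | p 0 ∈ Icc (0:ℝ) N ∧ p 1 ∈ Icc 0 h} := by
    intro p hp q hq c d hc hd hcd
    have e0 : (c • p + d • q) 0 = c * p 0 + d * q 0 := rfl
    have e1 : (c • p + d • q) 1 = c * p 1 + d * q 1 := rfl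
    constructor
    · rw [Set.mem_setOf_eq] at hp hq
      have := (convex_Icc (0:ℝ) N) hp.1 hq.1 hc hd hcd
      rw [e0]
      simpa [smul_eq_mul] using this
    · rw [Set.mem_setOf_eq] at hp hq
      have := (convex_Icc (0:ℝ) h) hp.2 hq.2 hc hd hcd
      rw [e1]
      simpa [smul_eq_mul] using this
  have hgen : ptsSet u N ⊆ {p : E2 | p 0 ∈ Icc (0:ℝ) N ∧ p 1 ∈ Icc 0 h} := by
    rintro p ⟨i, hi, rfl⟩
    rw [Set.mem_Iic] at hi
    constructor
    · show (i:ℝ) ∈ Icc (0:ℝ) N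
      exact ⟨Nat.cast_nonneg i, by exact_mod_cast hi⟩
    · show u i ∈ Icc (0:ℝ) h
      rcases hvals i with h1 | h1 <;> rw [h1]
      · exact ⟨le_refl 0, hh.le⟩
      · exact ⟨hh.le, le_refl h⟩
  have hsubbox := convexHull_min hgen hbox
  have h00 : pt 0 0 ∈ convexHull ℝ (ptsSet u N) := by
    apply subset_convexHull
    refine ⟨0, Set.mem_Iic.2 (Nat.zero_le N), ?_⟩
    show pt ((0:ℕ):ℝ) (u 0) = pt 0 0
    rw [hu0, Nat.cast_zero]
  have hNN : pt N (u N) ∈ convexHull ℝ (ptsSet u N) :=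
    subset_convexHull ℝ _ ⟨N, Set.mem_Iic.2 (le_refl N), rfl⟩
  refine ⟨convex_convexHull ℝ _, (ptsSet_finite u N).isCompact_convexHull (𝕜 := ℝ),
    fun p hp => hsubbox hp, ?_, Nat.cast_nonneg N, hh.le⟩
  intro x hx
  refine ⟨x / N * u N, ?_⟩
  set t := x / N with htd
  have ht0 : 0 ≤ t := div_nonneg hx.1 hNpos.le
  have ht1 : t ≤ 1 := (div_le_one hNpos).2 hx.2
  have hcomb : (1 - t) • pt 0 0 + t • pt N (u N) = pt x (x / N * u N) := by
    rw [pt_combo]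
    have e1 : (1-t)*0 + t*(N:ℝ) = x := by rw [htd]; field_simp; ring
    have e2 : (1-t)*0 + t*(u N) = x / N * u N := by rw [htd]; ring
    rw [e1, e2]
  rw [← hcomb]
  exact (convex_convexHull ℝ _) h00 hNN (by linarith) ht0 (by ring)

lemma interior_ne_of_det (hu0 : u 0 = 0) {j k N : ℕ}
    (hj : j ≤ N) (hk : k ≤ N) (hdet : (j:ℝ) * u k - (k:ℝ) * u j ≠ 0) :
    (interior (convexHull ℝ (ptsSet u N))).Nonempty := by
  rw [(convex_convexHull ℝ _).interior_nonempty_iff_affineSpan_eq_top]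
  set q0 : E2 := pt 0 0 with hq0
  set q1 : E2 := pt j (u j) with hq1
  set q2 : E2 := pt k (u k) with hq2
  have hcol : ¬ Collinear ℝ ({q0, q1, q2} : Set E2) := by
    intro hcol
    rw [collinear_iff_exists_forall_eq_smul_vadd] at hcol
    obtain ⟨p₀, v, hv⟩ := hcol
    obtain ⟨t0, ht0⟩ := hv q0 (by simp)
    obtain ⟨t1, ht1⟩ := hv q1 (by simp)
    obtain ⟨t2, ht2⟩ := hv q2 (by simp)
    have c00 : (0:ℝ) = t0 * v 0 + p₀ 0 := by
      have := congrArg (fun q : E2 => q 0) ht0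
      simpa [hq0, pt, vadd_eq_add] using this
    have c01 : (0:ℝ) = t0 * v 1 + p₀ 1 := by
      have := congrArg (fun q : E2 => q 1) ht0
      simpa [hq0, pt, vadd_eq_add] using this
    have c10 : (j:ℝ) = t1 * v 0 + p₀ 0 := by
      have := congrArg (fun q : E2 => q 0) ht1
      simpa [hq1, pt, vadd_eq_add] using this
    have c11 : u j = t1 * v 1 + p₀ 1 := by
      have := congrArg (fun q : E2 => q 1) ht1
      simpa [hq1, pt, vadd_eq_add] using this
    have c20 : (k:ℝ) = t2 * v 0 + p₀ 0 := by
      have := congrArg (fun q : E2 => q 0) ht2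
      simpa [hq2, pt, vadd_eq_add] using this
    have c21 : u k = t2 * v 1 + p₀ 1 := by
      have := congrArg (fun q : E2 => q 1) ht2
      simpa [hq2, pt, vadd_eq_add] using this
    have dj0 : (j:ℝ) = (t1 - t0) * v 0 := by linear_combination c10 - c00
    have dj1 : u j = (t1 - t0) * v 1 := by linear_combination c11 - c01
    have dk0 : (k:ℝ) = (t2 - t0) * v 0 := by linear_combination c20 - c00
    have dk1 : u k = (t2 - t0) * v 1 := by linear_combination c21 - c01
    apply hdet
    rw [dj0, dj1, dk0, dk1]
    ring
  have hai : AffineIndependent ℝ ![q0, q1, q2] :=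
    affineIndependent_iff_not_collinear_set.2 hcol
  have hsp : affineSpan ℝ (Set.range ![q0, q1, q2]) = ⊤ := by
    rw [hai.affineSpan_eq_top_iff_card_eq_finrank_add_one]
    simp [finrank_euclideanSpace_fin]
  have hrange : Set.range ![q0, q1, q2] ⊆ convexHull ℝ (ptsSet u N) := by
    intro z hz
    obtain ⟨i, rfl⟩ := hz
    apply subset_convexHull
    fin_cases i
    · exact ⟨0, Set.mem_Iic.2 (Nat.zero_le N), by
        show pt ((0:ℕ):ℝ) (u 0) = q0
        rw [hq0, hu0, Nat.cast_zero]⟩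
    · exact ⟨j, Set.mem_Iic.2 hj, rfl⟩
    · exact ⟨k, Set.mem_Iic.2 hk, rfl⟩
  exact top_unique (hsp ▸ affineSpan_mono ℝ hrange)

lemma interior_ne (hh : 0 < h) (hvals : ∀ n, u n = 0 ∨ u n = h) (hu0 : u 0 = 0)
    (hex : ∃ n, u n = h) {N : ℕ} (hN2 : 2 ≤ N) (hN1 : Nat.find hex ≤ N) :
    (interior (convexHull ℝ (ptsSet u N))).Nonempty := by
  set n1 := Nat.find hex with hn1d
  have hn1 : u n1 = h := Nat.find_spec hex
  have hpos : 1 ≤ n1 := by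
    by_contra hc
    have h0 : n1 = 0 := by omega
    rw [h0, hu0] at hn1
    exact hh.ne hn1
  rcases eq_or_lt_of_le hpos with h1 | h2
  · -- n1 = 1 : use j = 1, k = 2
    apply interior_ne_of_det u hu0 (j := 1) (k := 2) (by omega) (by omega)
    have hu1 : u 1 = h := by rw [show (1:ℕ) = n1 from h1]; exact hn1
    rcases hvals 2 with h2' | h2' <;> rw [hu1, h2'] <;> push_cast <;> intro hc <;> nlinarith
  · -- 2 ≤ n1 : use j = n1, k = 1; u 1 = 0
    apply interior_ne_of_det u hu0 (j := n1) (k := 1) hN1 (by omega)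
    have hu1 : u 1 = 0 := by
      rcases hvals 1 with e | e
      · exact e
      · exact absurd e (Nat.find_min hex (by omega))
    rw [hu1, hn1]
    push_cast
    intro hc
    nlinarith

lemma length_count (hh : 0 < h) (hvals : ∀ n, u n = 0 ∨ u n = h) (N : ℕ) :
    polyLength u N = ((blockCount u N 0 0 + blockCount u N h h : ℕ) : ℝ)
      + Real.sqrt (1 + h^2) * ((blockCount u N 0 h + blockCount u N h 0 : ℕ) : ℝ) ∧
    blockCount u N 0 0 + blockCount u N h h + (blockCount u N 0 h + blockCount u N h 0) = N := by
  have hne0 : (0:ℝ) ≠ h := hh.ne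
  have key1 : ∀ i ∈ Finset.range N, ((u i = u (i+1)) ↔
      ((u i = 0 ∧ u (i+1) = 0) ∨ (u i = h ∧ u (i+1) = h))) := by
    intro i _
    rcases hvals i with e1 | e1 <;> rcases hvals (i+1) with e2 | e2 <;> rw [e1, e2] <;>
      simp [hne0, hh.ne']
  have key2 : ∀ i ∈ Finset.range N, ((¬ u i = u (i+1)) ↔
      ((u i = 0 ∧ u (i+1) = h) ∨ (u i = h ∧ u (i+1) = 0))) := by
    intro i _
    rcases hvals i with e1 | e1 <;> rcases hvals (i+1) with e2 | e2 <;> rw [e1, e2] <;>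
      simp [hne0, hh.ne']
  have c1 : ((Finset.range N).filter (fun i => u i = u (i+1))).card
      = blockCount u N 0 0 + blockCount u N h h := by
    rw [Finset.filter_congr key1, Finset.filter_or, Finset.card_union_of_disjoint]
    · rfl
    · rw [Finset.disjoint_left]
      intro i hi1 hi2
      rw [Finset.mem_filter] at hi1 hi2
      exact hne0 (hi1.2.1.symm.trans hi2.2.1)
  have c2 : ((Finset.range N).filter (fun i => ¬ u i = u (i+1))).card
      = blockCount u N 0 h + blockCount u N h 0 := by
    rw [Finset.filter_congr key2, Finset.filter_or, Finset.card_union_of_disjoint]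
    · rfl
    · rw [Finset.disjoint_left]
      intro i hi1 hi2
      rw [Finset.mem_filter] at hi1 hi2
      exact hne0 (hi1.2.1.symm.trans hi2.2.1)
  have csum : blockCount u N 0 0 + blockCount u N h h
      + (blockCount u N 0 h + blockCount u N h 0) = N := by
    rw [← c1, ← c2, Finset.card_filter_add_card_filter_not, Finset.card_range]
  refine ⟨?_, csum⟩
  have hterm : ∀ i ∈ Finset.range N, Real.sqrt (1 + (u (i+1) - u i)^2)
      = if u i = u (i+1) then 1 else Real.sqrt (1+h^2) := by
    intro i _
    rcases hvals i with e1 | e1 <;> rcases hvals (i+1) with e2 | e2 <;> rw [e1, e2]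
    · rw [if_pos rfl]; norm_num
    · rw [if_neg hne0]; norm_num
    · rw [if_neg hh.ne']
      rw [show ((0:ℝ) - h)^2 = h^2 by ring]
    · rw [if_pos rfl]; norm_num
  rw [polyLength, Finset.sum_congr rfl hterm, Finset.sum_ite, Finset.sum_const,
    Finset.sum_const, c1, c2]
  simp only [nsmul_eq_mul, mul_one]
  push_cast
  ring

end App
end PolyAux

open PolyAux in
/-- Inconstancy of an infinite `{0,h}`-valued sequence with `u₀ = 0`, not identically
`0`, whose length-2 block frequencies exist: the inconstancy `lim_N ℐ(Γ_N)` exists and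
equals `F₀₀ + F_hh + √(1+h²)(F₀h + F_h0) = 1 + (√(1+h²) − 1)(F₀h + F_h0)`. -/
theorem polyIncon_binary_infinite
    (h : ℝ) (hh : 0 < h) (u : ℕ → ℝ) (hvals : ∀ n, u n = 0 ∨ u n = h)
    (hu0 : u 0 = 0) (hne : ∃ n, u n ≠ 0)
    (F00 Fhh F0h Fh0 : ℝ)
    (hF00 : Tendsto (fun N : ℕ => (blockCount u N 0 0 : ℝ) / N) atTop (nhds F00))
    (hFhh : Tendsto (fun N : ℕ => (blockCount u N h h : ℝ) / N) atTop (nhds Fhh))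
    (hF0h : Tendsto (fun N : ℕ => (blockCount u N 0 h : ℝ) / N) atTop (nhds F0h))
    (hFh0 : Tendsto (fun N : ℕ => (blockCount u N h 0 : ℝ) / N) atTop (nhds Fh0)) :
    Tendsto (fun N : ℕ => polyIncon u N) atTop
      (nhds (F00 + Fhh + Real.sqrt (1 + h ^ 2) * (F0h + Fh0))) ∧
    F00 + Fhh + Real.sqrt (1 + h ^ 2) * (F0h + Fh0)
      = 1 + (Real.sqrt (1 + h ^ 2) - 1) * (F0h + Fh0) := by
  have hex : ∃ n, u n = h := by
    obtain ⟨n, hn⟩ := hne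
    rcases hvals n with e | e
    · exact absurd e hn
    · exact ⟨n, e⟩
  have hS : Tendsto (fun N : ℕ => ((blockCount u N 0 0 + blockCount u N h h : ℕ) : ℝ) / N) atTop
      (nhds (F00 + Fhh)) := by
    refine (hF00.add hFhh).congr fun N => ?_
    push_cast
    rw [add_div]
  have hT : Tendsto (fun N : ℕ => ((blockCount u N 0 h + blockCount u N h 0 : ℕ) : ℝ) / N) atTop
      (nhds (F0h + Fh0)) := by
    refine (hF0h.add hFh0).congr fun N => ?_
    push_cast
    rw [add_div]
  have hsum1 : F00 + Fhh + (F0h + Fh0) = 1 := by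
    have h1 := hS.add hT
    have hev : (fun N : ℕ => ((blockCount u N 0 0 + blockCount u N h h : ℕ) : ℝ) / N
        + ((blockCount u N 0 h + blockCount u N h 0 : ℕ) : ℝ) / N) =ᶠ[atTop]
        (fun _ : ℕ => (1:ℝ)) := by
      filter_upwards [eventually_ge_atTop 1] with N hN
      have hc := (length_count u hh hvals N).2
      have hNne : (N:ℝ) ≠ 0 := Nat.cast_ne_zero.2 (by omega)
      rw [← add_div, div_eq_one_iff_eq hNne]
      exact_mod_cast congrArg (Nat.cast (R := ℝ)) hc
    exact tendsto_nhds_unique h1 (Tendsto.congr' hev.symm tendsto_const_nhds)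
  have hLen : Tendsto (fun N : ℕ => polyLength u N / N) atTop
      (nhds (F00 + Fhh + Real.sqrt (1+h^2) * (F0h + Fh0))) := by
    refine (hS.add (hT.const_mul (Real.sqrt (1+h^2)))).congr fun N => ?_
    rw [(length_count u hh hvals N).1, add_div, mul_div_assoc]
  set C : ℕ := max (Nat.find hex) 3 with hC
  have hbounds : ∀ N : ℕ, C ≤ N →
      2*(N:ℝ) - 4 ≤ polyDelta u N ∧ polyDelta u N ≤ 2*N + 6*h := by
    intro N hN
    have hN3 : 3 ≤ N := le_trans (le_max_right _ 3) hN
    have hfind : Nat.find hex ≤ N := le_trans (le_max_left _ _) hN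
    have hN1 : 1 ≤ N := by omega
    have hnice := nice_hull u hh hvals hu0 hN1
    have hint := interior_ne u hh hvals hu0 hex (by omega) hfind
    have hup := hnice.perim_upper hint
    have hlo := hnice.perim_lower hint (by exact_mod_cast hN3 : (2:ℝ) < N)
    rw [polyDelta, hull_eq u hN1]
    have hfin : μH[1] (frontier (convexHull ℝ (ptsSet u N))) ≠ ⊤ :=
      ne_top_of_le_ne_top ENNReal.ofReal_ne_top hup
    constructor
    · have := (ENNReal.ofReal_le_iff_le_toReal hfin).1 hlo
      linarith [this]
    · refine ENNReal.toReal_le_of_le_ofReal ?_ hup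
      have := Nat.cast_nonneg (α := ℝ) N
      nlinarith [hh.le]
  have hlow : Tendsto (fun N : ℕ => (2*(N:ℝ) - 4)/N) atTop (nhds 2) := by
    have h4 : Tendsto (fun N : ℕ => (4:ℝ)/N) atTop (nhds 0) :=
      tendsto_const_div_atTop_nhds_zero_nat 4
    have h2' := (tendsto_const_nhds (x := (2:ℝ)) (f := atTop)).sub h4
    rw [sub_zero] at h2'
    apply h2'.congr'
    filter_upwards [eventually_ge_atTop 1] with N hN
    have hNne : (N:ℝ) ≠ 0 := Nat.cast_ne_zero.2 (by omega)
    field_simp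
  have hhigh : Tendsto (fun N : ℕ => (2*(N:ℝ) + 6*h)/N) atTop (nhds 2) := by
    have h4 : Tendsto (fun N : ℕ => (6*h:ℝ)/N) atTop (nhds 0) :=
      tendsto_const_div_atTop_nhds_zero_nat (6*h)
    have h2' := (tendsto_const_nhds (x := (2:ℝ)) (f := atTop)).add h4
    rw [add_zero] at h2'
    apply h2'.congr'
    filter_upwards [eventually_ge_atTop 1] with N hN
    have hNne : (N:ℝ) ≠ 0 := Nat.cast_ne_zero.2 (by omega)
    field_simp
  have hDelta : Tendsto (fun N : ℕ => polyDelta u N / N) atTop (nhds 2) := by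
    apply tendsto_of_tendsto_of_tendsto_of_le_of_le' hlow hhigh
    · filter_upwards [eventually_ge_atTop C] with N hN
      have hNc : (0:ℝ) ≤ (N:ℝ) := Nat.cast_nonneg N
      gcongr
      exact (hbounds N hN).1
    · filter_upwards [eventually_ge_atTop C] with N hN
      have hNc : (0:ℝ) ≤ (N:ℝ) := Nat.cast_nonneg N
      gcongr
      exact (hbounds N hN).2
  have hquot := (hLen.const_mul (2:ℝ)).div hDelta two_ne_zero
  have hIncon : Tendsto (fun N : ℕ => polyIncon u N) atTop
      (nhds (F00 + Fhh + Real.sqrt (1+h^2) * (F0h + Fh0))) := by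
    have hval : (2 * (F00 + Fhh + Real.sqrt (1+h^2)*(F0h+Fh0))) / 2
        = F00 + Fhh + Real.sqrt (1+h^2)*(F0h+Fh0) := by ring
    rw [← hval]
    apply hquot.congr'
    filter_upwards [eventually_ge_atTop 1] with N hN
    have hNne : (N:ℝ) ≠ 0 := Nat.cast_ne_zero.2 (by omega)
    show 2 * (polyLength u N / N) / (polyDelta u N / N) = polyIncon u N
    rw [polyIncon]
    rcases eq_or_ne (polyDelta u N) 0 with h0 | h0
    · rw [h0]; simp
    · field_simp
  exact ⟨hIncon, by linear_combination hsum1⟩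
end
end
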